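/- arXiv:2110.15566 — 7 statements merged into one kernel-verified Lean document; each statement's English description precedes it below -/
import Mathlib

section
/- The generating function for pairs of mutually annihilating matrices satisfies: sum over n ≥ 0 of #{(A,B) ∈ Mat_n(F_q)² : AB = BA = 0} / #GL_n(F_q) times x^n equals sum over n ≥ 0 of sum over k from 0 to n of [n choose k]_t / (t;t)_k times x^n, where t = q^{-1}. -/
open LinearMap Module Matrix

section general
variable {R M : Type*} [Ring R] [AddCommGroup M] [Module R M]

/-- Maps with range in `K` and kernel containing `U` are linear maps `M⧸U → K`. -/
noncomputable def annihilatorEquiv (K U : Submodule R M) :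
    {g : M →ₗ[R] M // LinearMap.range g ≤ K ∧ U ≤ LinearMap.ker g} ≃ ((M ⧸ U) →ₗ[R] K) where
  toFun g := Submodule.liftQ U (LinearMap.codRestrict K g.1 (fun x => g.2.1 ⟨x, rfl⟩))
    (by rw [LinearMap.ker_codRestrict]; exact g.2.2)
  invFun h := ⟨K.subtype ∘ₗ h ∘ₗ U.mkQ,
    le_trans (LinearMap.range_comp_le_range _ _) (by rw [Submodule.range_subtype]),
    fun x hx => by
      simp [LinearMap.mem_ker, (Submodule.Quotient.mk_eq_zero _).2 hx]⟩
  left_inv g := Subtype.ext (LinearMap.ext fun x => by simp)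
  right_inv h := by
    refine LinearMap.ext fun y => ?_
    obtain ⟨x, rfl⟩ := U.mkQ_surjective y
    exact Subtype.ext (by simp)
end general

section field
variable (F : Type*) [Field F] [Fintype F]

lemma card_linearMap (V W : Type*) [AddCommGroup V] [Module F V] [AddCommGroup W] [Module F W]
    [Finite V] [Finite W] :
    Nat.card (V →ₗ[F] W) = Fintype.card F ^ (finrank F V * finrank F W) := by
  have : Module.Finite F V := Module.Finite.of_finite
  have : Module.Finite F W := Module.Finite.of_finite
  have : Finite (V →ₗ[F] W) := Finite.of_injective _ DFunLike.coe_injective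
  letI : Fintype (V →ₗ[F] W) := Fintype.ofFinite _
  rw [Nat.card_eq_fintype_card, card_eq_pow_finrank (K := F), Module.finrank_linearMap]
end field

section field2
variable {F : Type*} [Field F] [Fintype F] {n : ℕ}

lemma toLin'_eq_mulVecLin {m : ℕ} (A : Matrix (Fin m) (Fin n) F) : Matrix.toLin' A = A.mulVecLin :=
  LinearMap.ext fun v => by simp [Matrix.toLin'_apply, Matrix.mulVecLin_apply]

lemma mul_eq_zero_iff_range_le_ker (A B : Matrix (Fin n) (Fin n) F) :
    A * B = 0 ↔ LinearMap.range B.mulVecLin ≤ LinearMap.ker A.mulVecLin := by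
  rw [LinearMap.range_le_ker_iff, ← Matrix.mulVecLin_mul,
    ← Matrix.mulVecLin_zero (m := Fin n) (n := Fin n) (R := F)]
  constructor
  · intro h; rw [h]
  · intro h
    have := Matrix.toLin'.injective (a₁ := A * B) (a₂ := 0)
    rw [toLin'_eq_mulVecLin, toLin'_eq_mulVecLin] at this
    exact this h

lemma card_annihilator (A : Matrix (Fin n) (Fin n) F) :
    Nat.card {B : Matrix (Fin n) (Fin n) F // A * B = 0 ∧ B * A = 0}
      = Fintype.card F ^ ((n - A.rank) * (n - A.rank)) := by
  classical
  have e1 : {B : Matrix (Fin n) (Fin n) F // A * B = 0 ∧ B * A = 0} ≃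
      {g : (Fin n → F) →ₗ[F] (Fin n → F) //
        LinearMap.range g ≤ LinearMap.ker A.mulVecLin ∧
        LinearMap.range A.mulVecLin ≤ LinearMap.ker g} := by
    refine (Matrix.toLin'.toEquiv.subtypeEquiv fun B => ?_)
    show _ ↔ LinearMap.range (Matrix.toLin' B) ≤ _ ∧ _ ≤ LinearMap.ker (Matrix.toLin' B)
    rw [toLin'_eq_mulVecLin]
    exact and_congr (mul_eq_zero_iff_range_le_ker A B) (mul_eq_zero_iff_range_le_ker B A)
  rw [Nat.card_congr e1, Nat.card_congr (annihilatorEquiv _ _), card_linearMap]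
  have h := LinearMap.finrank_range_add_finrank_ker A.mulVecLin
  rw [Module.finrank_fintype_fun_eq_card, Fintype.card_fin] at h
  have hq := Submodule.finrank_quotient_add_finrank (LinearMap.range A.mulVecLin)
  rw [Module.finrank_fintype_fun_eq_card, Fintype.card_fin] at hq
  have hrank : A.rank = finrank F (LinearMap.range A.mulVecLin) := rfl
  congr 2
  · omega
  · omega
end field2

section field3
variable {F : Type*} [Field F] [Fintype F] {n r : ℕ}

lemma inj_iff_rank (J : Matrix (Fin n) (Fin r) F) :
    Function.Injective J.mulVecLin ↔ J.rank = r := by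
  have h := LinearMap.finrank_range_add_finrank_ker J.mulVecLin
  rw [Module.finrank_fintype_fun_eq_card, Fintype.card_fin] at h
  rw [← LinearMap.ker_eq_bot, ← Submodule.finrank_eq_zero]
  show _ ↔ finrank F (LinearMap.range J.mulVecLin) = r
  omega

lemma surj_iff_rank (S : Matrix (Fin r) (Fin n) F) :
    Function.Surjective S.mulVecLin ↔ S.rank = r := by
  rw [← LinearMap.range_eq_top]
  constructor
  · intro h
    show finrank F (LinearMap.range S.mulVecLin) = r
    rw [h, finrank_top, Module.finrank_fintype_fun_eq_card, Fintype.card_fin]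
  · intro h
    apply Submodule.eq_top_of_finrank_eq
    rw [Module.finrank_fintype_fun_eq_card, Fintype.card_fin]
    exact h

lemma card_inj_matrices (hrn : r ≤ n) :
    Nat.card {J : Matrix (Fin n) (Fin r) F // Function.Injective J.mulVecLin}
      = ∏ i ∈ Finset.range r, (Fintype.card F ^ n - Fintype.card F ^ i) := by
  have e : {J : Matrix (Fin n) (Fin r) F // Function.Injective J.mulVecLin}
      ≃ {s : Fin r → (Fin n → F) // LinearIndependent F s} := by
    refine Equiv.subtypeEquiv ⟨fun J => fun i => Jᵀ i, fun s => (Matrix.of s)ᵀ,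
      fun J => by ext i j; rfl, fun s => rfl⟩ fun J => ?_
    rw [Matrix.coe_mulVecLin]
    exact Matrix.mulVec_injective_iff
  rw [Nat.card_congr e, card_linearIndependent
    (by rw [Module.finrank_fintype_fun_eq_card, Fintype.card_fin]; exact hrn)]
  rw [Module.finrank_fintype_fun_eq_card, Fintype.card_fin, Finset.prod_range]

lemma card_surj_matrices (hrn : r ≤ n) :
    Nat.card {S : Matrix (Fin r) (Fin n) F // Function.Surjective S.mulVecLin}
      = ∏ i ∈ Finset.range r, (Fintype.card F ^ n - Fintype.card F ^ i) := by
  have e : {S : Matrix (Fin r) (Fin n) F // Function.Surjective S.mulVecLin}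
      ≃ {J : Matrix (Fin n) (Fin r) F // Function.Injective J.mulVecLin} := by
    refine Equiv.subtypeEquiv ⟨fun S => Sᵀ, fun J => Jᵀ,
      fun S => Matrix.transpose_transpose S, fun J => Matrix.transpose_transpose J⟩ fun S => ?_
    rw [surj_iff_rank, inj_iff_rank]
    show _ ↔ (Sᵀ).rank = r
    rw [Matrix.rank_transpose]
  rw [Nat.card_congr e, card_inj_matrices hrn]

end field3

section field4
variable {F : Type*} [Field F] [Fintype F] {n r m : ℕ}

lemma matrix_ext_of_mulVec {a b : ℕ} {M M' : Matrix (Fin a) (Fin b) F}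
    (h : ∀ v, M.mulVec v = M'.mulVec v) : M = M' := by
  apply Matrix.toLin'.injective
  exact LinearMap.ext fun v => by simp [Matrix.toLin'_apply, h v]

lemma matrix_left_cancel {a b c : ℕ} (J : Matrix (Fin a) (Fin b) F)
    (hJ : Function.Injective J.mulVecLin) {M M' : Matrix (Fin b) (Fin c) F}
    (h : J * M = J * M') : M = M' := by
  apply matrix_ext_of_mulVec (F := F)
  intro v
  apply hJ
  show J.mulVec (M.mulVec v) = J.mulVec (M'.mulVec v)
  rw [Matrix.mulVec_mulVec, Matrix.mulVec_mulVec, h]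

lemma exists_factorization (A : Matrix (Fin n) (Fin n) F) (hA : A.rank = r) :
    ∃ (S₀ : Matrix (Fin r) (Fin n) F) (J₀ : Matrix (Fin n) (Fin r) F),
      J₀ * S₀ = A ∧ Function.Surjective S₀.mulVecLin ∧ Function.Injective J₀.mulVecLin := by
  classical
  have hfr : finrank F (LinearMap.range A.mulVecLin) = finrank F (Fin r → F) := by
    rw [Module.finrank_fintype_fun_eq_card, Fintype.card_fin]; exact hA
  obtain ⟨e⟩ := FiniteDimensional.nonempty_linearEquiv_of_finrank_eq hfr
  set s : (Fin n → F) →ₗ[F] (Fin r → F) := e.toLinearMap ∘ₗ A.mulVecLin.rangeRestrict with hs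
  set j : (Fin r → F) →ₗ[F] (Fin n → F) :=
    (LinearMap.range A.mulVecLin).subtype ∘ₗ e.symm.toLinearMap with hj
  refine ⟨LinearMap.toMatrix' s, LinearMap.toMatrix' j, ?_, ?_, ?_⟩
  · rw [← LinearMap.toMatrix'_comp]
    have : j ∘ₗ s = A.mulVecLin := by
      ext v
      simp [hs, hj]
    rw [this, ← toLin'_eq_mulVecLin, LinearMap.toMatrix'_toLin']
  · rw [← toLin'_eq_mulVecLin, Matrix.toLin'_toMatrix']
    exact e.surjective.comp A.mulVecLin.surjective_rangeRestrict
  · rw [← toLin'_eq_mulVecLin, Matrix.toLin'_toMatrix']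
    exact (LinearMap.range A.mulVecLin).injective_subtype.comp e.symm.injective

lemma exists_left_inverse {J : Matrix (Fin n) (Fin r) F}
    (hJ : Function.Injective J.mulVecLin) : ∃ L : Matrix (Fin r) (Fin n) F, L * J = 1 := by
  obtain ⟨g, hg⟩ := J.mulVecLin.exists_leftInverse_of_injective (LinearMap.ker_eq_bot.2 hJ)
  refine ⟨LinearMap.toMatrix' g, ?_⟩
  have : LinearMap.toMatrix' g * LinearMap.toMatrix' (Matrix.toLin' J) = 1 := by
    rw [← LinearMap.toMatrix'_comp, toLin'_eq_mulVecLin, hg, LinearMap.toMatrix'_id]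
  rwa [LinearMap.toMatrix'_toLin'] at this
end field4

section field5
variable {F : Type*} [Field F] [Fintype F] {n r : ℕ}

lemma range_eq_of_factor {S : Matrix (Fin r) (Fin n) F} {J : Matrix (Fin n) (Fin r) F}
    {A : Matrix (Fin n) (Fin n) F} (h : J * S = A) (hS : Function.Surjective S.mulVecLin) :
    LinearMap.range J.mulVecLin = LinearMap.range A.mulVecLin := by
  rw [← h, Matrix.mulVecLin_mul,
    LinearMap.range_comp_of_range_eq_top _ (LinearMap.range_eq_top.2 hS)]

lemma absorb {A : Matrix (Fin n) (Fin n) F} {S₀ S : Matrix (Fin r) (Fin n) F}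
    {J₀ J : Matrix (Fin n) (Fin r) F} {L : Matrix (Fin r) (Fin n) F}
    (hJ₀S₀ : J₀ * S₀ = A) (hS₀ : Function.Surjective S₀.mulVecLin) (hL : L * J₀ = 1)
    (hJS : J * S = A) (hS : Function.Surjective S.mulVecLin) :
    J₀ * (L * J) = J := by
  have hr : LinearMap.range J.mulVecLin = LinearMap.range J₀.mulVecLin :=
    (range_eq_of_factor hJS hS).trans (range_eq_of_factor hJ₀S₀ hS₀).symm
  apply matrix_ext_of_mulVec (F := F)
  intro v
  have hv : J.mulVec v ∈ LinearMap.range J₀.mulVecLin := by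
    rw [← hr]; exact ⟨v, rfl⟩
  obtain ⟨w, hw⟩ := hv
  rw [Matrix.mulVecLin_apply] at hw
  rw [← Matrix.mulVec_mulVec, ← Matrix.mulVec_mulVec, ← hw, Matrix.mulVec_mulVec,
    Matrix.mulVec_mulVec, Matrix.mul_assoc, hL, Matrix.mul_one]

lemma card_fiber (A : Matrix (Fin n) (Fin n) F) (hA : A.rank = r) :
    Nat.card {p : Matrix (Fin r) (Fin n) F × Matrix (Fin n) (Fin r) F //
        (Function.Surjective p.1.mulVecLin ∧ Function.Injective p.2.mulVecLin) ∧
          p.2 * p.1 = A}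
      = Nat.card (GL (Fin r) F) := by
  obtain ⟨S₀, J₀, hJ₀S₀, hS₀, hJ₀⟩ := exists_factorization A hA
  obtain ⟨L, hL⟩ := exists_left_inverse hJ₀
  symm
  apply Nat.card_congr
  refine Equiv.ofBijective (fun g =>
    ⟨((↑g⁻¹ : Matrix (Fin r) (Fin r) F) * S₀, J₀ * (↑g : Matrix (Fin r) (Fin r) F)),
      ⟨⟨?_, ?_⟩, ?_⟩⟩) ⟨?_, ?_⟩
  · rw [Matrix.mulVecLin_mul, LinearMap.coe_comp]
    refine Function.Surjective.comp ?_ hS₀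
    rw [Matrix.coe_mulVecLin]
    exact Matrix.mulVec_surjective_iff_isUnit.2 (g⁻¹).isUnit
  · rw [Matrix.mulVecLin_mul, LinearMap.coe_comp]
    refine Function.Injective.comp hJ₀ ?_
    rw [Matrix.coe_mulVecLin]
    exact Matrix.mulVec_injective_iff_isUnit.2 g.isUnit
  · show J₀ * (↑g : Matrix (Fin r) (Fin r) F) * ((↑g⁻¹ : Matrix (Fin r) (Fin r) F) * S₀) = A
    rw [Matrix.mul_assoc, ← Matrix.mul_assoc (↑g : Matrix (Fin r) (Fin r) F),
      Units.mul_inv, Matrix.one_mul, hJ₀S₀]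
  · intro g g' hgg'
    have h2 := congrArg (fun p => p.val.2) hgg'
    simp only at h2
    exact Units.ext (matrix_left_cancel J₀ hJ₀ h2)
  · rintro ⟨⟨S, J⟩, ⟨hS, hJ⟩, hJS⟩
    have habs : J₀ * (L * J) = J := absorb hJ₀S₀ hS₀ hL hJS hS
    have hinj : Function.Injective (L * J).mulVec := by
      have : Function.Injective (L * J).mulVecLin := by
        rw [← LinearMap.ker_eq_bot, LinearMap.ker_eq_bot']
        intro x hx
        have hx' : (L * J).mulVec x = 0 := hx
        have hJx : J.mulVec x = 0 := by
          have := congrArg (fun M => Matrix.mulVec M x) habs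
          rw [← this, ← Matrix.mulVec_mulVec, hx', Matrix.mulVec_zero]
        have : J.mulVecLin x = J.mulVecLin 0 := by
          rw [Matrix.mulVecLin_apply, Matrix.mulVecLin_apply, hJx, Matrix.mulVec_zero]
        exact hJ this
      rwa [Matrix.coe_mulVecLin] at this
    have hu : IsUnit (L * J) := Matrix.mulVec_injective_iff_isUnit.1 hinj
    refine ⟨hu.unit, ?_⟩
    have hg : (↑hu.unit : Matrix (Fin r) (Fin r) F) = L * J := hu.unit_spec
    have h2 : J₀ * (↑hu.unit : Matrix (Fin r) (Fin r) F) = J := by rw [hg]; exact habs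
    have h1 : (↑hu.unit : Matrix (Fin r) (Fin r) F) * S = S₀ := by
      apply matrix_left_cancel J₀ hJ₀
      rw [← Matrix.mul_assoc, h2, hJS, hJ₀S₀]
    apply Subtype.ext
    apply Prod.ext
    · show (↑hu.unit⁻¹ : Matrix (Fin r) (Fin r) F) * S₀ = S
      rw [← h1, ← Matrix.mul_assoc, Units.inv_mul, Matrix.one_mul]
    · exact h2

end field5

section field6
variable {F : Type*} [Field F] [Fintype F] {n r : ℕ}

lemma rank_mul_of_surj_inj {S : Matrix (Fin r) (Fin n) F} {J : Matrix (Fin n) (Fin r) F}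
    (hS : Function.Surjective S.mulVecLin) (hJ : Function.Injective J.mulVecLin) :
    (J * S).rank = r := by
  have h : LinearMap.range (J * S).mulVecLin = LinearMap.range J.mulVecLin := by
    rw [Matrix.mulVecLin_mul]
    exact LinearMap.range_comp_of_range_eq_top _ (LinearMap.range_eq_top.2 hS)
  show finrank F _ = r
  rw [h, LinearMap.finrank_range_of_inj hJ, Module.finrank_fintype_fun_eq_card, Fintype.card_fin]

lemma card_rank_mul_card_GL (hrn : r ≤ n) :
    Nat.card {A : Matrix (Fin n) (Fin n) F // A.rank = r} * Nat.card (GL (Fin r) F)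
      = (∏ i ∈ Finset.range r, (Fintype.card F ^ n - Fintype.card F ^ i)) ^ 2 := by
  classical
  have hX : Nat.card {p : Matrix (Fin r) (Fin n) F × Matrix (Fin n) (Fin r) F //
      Function.Surjective p.1.mulVecLin ∧ Function.Injective p.2.mulVecLin}
      = (∏ i ∈ Finset.range r, (Fintype.card F ^ n - Fintype.card F ^ i)) ^ 2 := by
    rw [Nat.card_congr (Equiv.subtypeProdEquivProd
      (p := fun S : Matrix (Fin r) (Fin n) F => Function.Surjective S.mulVecLin)
      (q := fun J : Matrix (Fin n) (Fin r) F => Function.Injective J.mulVecLin)), Nat.card_prod,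
      card_surj_matrices hrn, card_inj_matrices hrn, sq]
  rw [← hX]
  let φ : {p : Matrix (Fin r) (Fin n) F × Matrix (Fin n) (Fin r) F //
      Function.Surjective p.1.mulVecLin ∧ Function.Injective p.2.mulVecLin} →
      {A : Matrix (Fin n) (Fin n) F // A.rank = r} :=
    fun p => ⟨p.1.2 * p.1.1, rank_mul_of_surj_inj p.2.1 p.2.2⟩
  rw [Nat.card_congr (Equiv.sigmaFiberEquiv φ).symm]
  have hfib : ∀ A : {A : Matrix (Fin n) (Fin n) F // A.rank = r},
      Nat.card {p // φ p = A} = Nat.card (GL (Fin r) F) := by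
    intro A
    rw [← card_fiber A.1 A.2]
    apply Nat.card_congr
    refine ⟨fun p => ⟨p.1.1, ⟨p.1.2, congrArg Subtype.val p.2⟩⟩,
      fun p => ⟨⟨p.1, p.2.1⟩, Subtype.ext p.2.2⟩, fun p => rfl, fun p => rfl⟩
  letI : Fintype {A : Matrix (Fin n) (Fin n) F // A.rank = r} := Fintype.ofFinite _
  letI : ∀ y : {A : Matrix (Fin n) (Fin n) F // A.rank = r}, Fintype {x // φ x = y} :=
    fun y => Fintype.ofFinite _
  rw [Nat.card_eq_fintype_card (α := (y : {A : Matrix (Fin n) (Fin n) F // A.rank = r}) ×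
      {x // φ x = y}), Fintype.card_sigma,
    Finset.sum_congr rfl (fun A _ => ((Nat.card_eq_fintype_card).symm.trans (hfib A))),
    Finset.sum_const, Finset.card_univ, smul_eq_mul,
    Nat.card_eq_fintype_card]
end field6

section field7
variable {F : Type*} [Field F] [Fintype F]

lemma main_count (n : ℕ) :
    Nat.card {p : Matrix (Fin n) (Fin n) F × Matrix (Fin n) (Fin n) F //
        p.1 * p.2 = 0 ∧ p.2 * p.1 = 0}
      = ∑ r ∈ Finset.range (n + 1), Nat.card {A : Matrix (Fin n) (Fin n) F // A.rank = r} *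
          Fintype.card F ^ ((n - r) * (n - r)) := by
  classical
  rw [Nat.card_congr (Equiv.subtypeProdEquivSigmaSubtype
    (fun A B : Matrix (Fin n) (Fin n) F => A * B = 0 ∧ B * A = 0))]
  letI : ∀ A : Matrix (Fin n) (Fin n) F,
      Fintype {B : Matrix (Fin n) (Fin n) F // A * B = 0 ∧ B * A = 0} :=
    fun A => Fintype.ofFinite _
  rw [Nat.card_eq_fintype_card, Fintype.card_sigma]
  have h1 : ∀ A : Matrix (Fin n) (Fin n) F,
      Fintype.card {B : Matrix (Fin n) (Fin n) F // A * B = 0 ∧ B * A = 0}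
        = Fintype.card F ^ ((n - A.rank) * (n - A.rank)) :=
    fun A => (Nat.card_eq_fintype_card).symm.trans (card_annihilator A)
  rw [Finset.sum_congr rfl (fun A _ => h1 A)]
  rw [← Finset.sum_fiberwise_of_maps_to (g := fun A : Matrix (Fin n) (Fin n) F => A.rank)
    (t := Finset.range (n + 1)) (fun A _ => Finset.mem_range.2 (Nat.lt_succ_of_le A.rank_le_width))]
  refine Finset.sum_congr rfl fun r _ => ?_
  rw [Finset.sum_congr rfl (fun A hA => by
      rw [(Finset.mem_filter.1 hA).2]), Finset.sum_const, smul_eq_mul]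
  congr 1
  rw [Nat.card_eq_fintype_card, Fintype.card_subtype]
end field7

section rat
variable {q : ℕ} {t : ℚ} (hq : 2 ≤ q) (ht : t = (q : ℚ)⁻¹)
include hq ht

lemma t_lt_one : 0 < t ∧ t < 1 := by
  subst ht
  constructor
  · positivity
  · rw [inv_lt_one_iff₀]
    right
    exact_mod_cast Nat.lt_of_lt_of_le Nat.one_lt_two hq

lemma P_pos (m : ℕ) : 0 < ∏ i ∈ Finset.range m, (1 - t ^ (i + 1)) := by
  apply Finset.prod_pos
  intro i _
  have h1 := t_lt_one hq ht
  have : t ^ (i + 1) < 1 := pow_lt_one₀ h1.1.le h1.2 (Nat.succ_ne_zero i)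
  linarith

lemma P_ne (m : ℕ) : (∏ i ∈ Finset.range m, (1 - t ^ (i + 1))) ≠ 0 := (P_pos hq ht m).ne'

lemma factor_eq {i m : ℕ} (him : i < m) :
    ((q : ℚ) ^ m - (q : ℚ) ^ i) = (q : ℚ) ^ m * (1 - t ^ (m - i)) := by
  have hq0 : (0:ℚ) < (q : ℚ) ^ (m - i) := by positivity
  have hpow : (q:ℚ) ^ i * (q:ℚ) ^ (m - i) = (q:ℚ) ^ m := by rw [← pow_add]; congr 1; omega
  have h2 : (q:ℚ) ^ m * ((q:ℚ) ^ (m - i))⁻¹ = (q:ℚ) ^ i := by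
    rw [← hpow, mul_inv_cancel_right₀ hq0.ne']
  rw [ht, inv_pow, mul_sub, mul_one, h2]

lemma G_eq (m : ℕ) :
    (∏ i ∈ Finset.range m, ((q : ℚ) ^ m - (q : ℚ) ^ i))
      = (q : ℚ) ^ (m * m) * ∏ i ∈ Finset.range m, (1 - t ^ (i + 1)) := by
  have h2 : (∏ i ∈ Finset.range m, (1 - t ^ (m - i)))
      = ∏ i ∈ Finset.range m, (1 - t ^ (i + 1)) := by
    rw [← Finset.prod_range_reflect (fun j => 1 - t ^ (j + 1)) m]
    refine Finset.prod_congr rfl fun i hi => ?_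
    have him := Finset.mem_range.1 hi
    congr 2
    omega
  rw [Finset.prod_congr rfl (fun i hi => factor_eq hq ht (Finset.mem_range.1 hi)),
    Finset.prod_mul_distrib, Finset.prod_const, Finset.card_range, ← pow_mul, h2]

lemma I_eq {n r : ℕ} (hrn : r ≤ n) :
    (∏ i ∈ Finset.range r, ((q : ℚ) ^ n - (q : ℚ) ^ i)) *
        (∏ i ∈ Finset.range (n - r), (1 - t ^ (i + 1)))
      = (q : ℚ) ^ (n * r) * ∏ i ∈ Finset.range n, (1 - t ^ (i + 1)) := by
  have h1 : ∀ i ∈ Finset.range r, ((q : ℚ) ^ n - (q : ℚ) ^ i)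
      = (q : ℚ) ^ n * (1 - t ^ (n - i)) :=
    fun i hi => factor_eq hq ht (lt_of_lt_of_le (Finset.mem_range.1 hi) hrn)
  rw [Finset.prod_congr rfl h1, Finset.prod_mul_distrib, Finset.prod_const, Finset.card_range,
    ← pow_mul]
  have h2 : (∏ i ∈ Finset.range r, (1 - t ^ (n - i)))
      = ∏ i ∈ Finset.range r, (1 - t ^ ((n - r) + i + 1)) := by
    rw [← Finset.prod_range_reflect (fun j => 1 - t ^ ((n - r) + j + 1)) r]
    refine Finset.prod_congr rfl fun i hi => ?_
    have him := Finset.mem_range.1 hi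
    congr 2
    omega
  have h3 : (∏ i ∈ Finset.range n, (1 - t ^ (i + 1)))
      = (∏ i ∈ Finset.range (n - r), (1 - t ^ (i + 1))) *
        ∏ i ∈ Finset.range r, (1 - t ^ ((n - r) + i + 1)) := by
    rw [← Finset.prod_range_add]
    apply Finset.prod_congr (by congr 1; omega) fun i _ => rfl
  rw [h2, h3]
  ring
end rat

section rat2
variable {q : ℕ} {t : ℚ} (hq : 2 ≤ q) (ht : t = (q : ℚ)⁻¹)
include hq ht

lemma key_identity {n k r : ℕ} (hk : k + r = n) (a glr gln I : ℚ)
    (hNN : a * glr = I ^ 2)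
    (hI : I * (∏ i ∈ Finset.range k, (1 - t ^ (i + 1)))
      = (q : ℚ) ^ (n * r) * ∏ i ∈ Finset.range n, (1 - t ^ (i + 1)))
    (hGLr : glr = (q : ℚ) ^ (r * r) * ∏ i ∈ Finset.range r, (1 - t ^ (i + 1)))
    (hGLn : gln = (q : ℚ) ^ (n * n) * ∏ i ∈ Finset.range n, (1 - t ^ (i + 1))) :
    a * (q : ℚ) ^ (k * k) / gln
      = ((∏ i ∈ Finset.range n, (1 - t ^ (i + 1))) /
          ((∏ i ∈ Finset.range k, (1 - t ^ (i + 1))) *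
            ∏ i ∈ Finset.range r, (1 - t ^ (i + 1)))) /
        ∏ i ∈ Finset.range k, (1 - t ^ (i + 1)) := by
  have hq0 : (q : ℚ) ≠ 0 := by
    simp only [ne_eq, Nat.cast_eq_zero]
    omega
  have hPk := P_ne hq ht k
  have hPr := P_ne hq ht r
  have hPn := P_ne hq ht n
  have hI2 : (I * (∏ i ∈ Finset.range k, (1 - t ^ (i + 1)))) ^ 2
      = ((q : ℚ) ^ (n * r) * ∏ i ∈ Finset.range n, (1 - t ^ (i + 1))) ^ 2 := by rw [hI]
  subst hk
  subst hGLr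
  subst hGLn
  rw [div_div, div_eq_div_iff (mul_ne_zero (pow_ne_zero _ hq0) hPn)
    (mul_ne_zero (mul_ne_zero hPk hPr) hPk)]
  apply mul_right_cancel₀ (mul_ne_zero (pow_ne_zero (r * r) hq0) hPr)
  linear_combination ((q : ℚ) ^ (k * k) * (∏ i ∈ Finset.range k, (1 - t ^ (i + 1))) *
      (∏ i ∈ Finset.range k, (1 - t ^ (i + 1))) * (∏ i ∈ Finset.range r, (1 - t ^ (i + 1)))) * hNN +
    ((q : ℚ) ^ (k * k) * (∏ i ∈ Finset.range r, (1 - t ^ (i + 1)))) * hI2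
end rat2

/-- The generating function for pairs of mutually annihilating matrices:
`∑_{n≥0} #{(A,B) ∈ Mat_n(F_q)² : AB = BA = 0} / #GL_n(F_q) · x^n
  = ∑_{n≥0} (∑_{k=0}^n [n choose k]_t / (t;t)_k) · x^n`, where `t = q⁻¹`,
as formal power series in `x` over `ℚ`. -/
theorem stmt_3 (F : Type*) [Field F] [Fintype F] (t : ℚ)
    (ht : t = (Fintype.card F : ℚ)⁻¹) :
    PowerSeries.mk (fun n =>
      (Nat.card {p : Matrix (Fin n) (Fin n) F × Matrix (Fin n) (Fin n) F //
          p.1 * p.2 = 0 ∧ p.2 * p.1 = 0} : ℚ) /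
        (Nat.card (Matrix.GeneralLinearGroup (Fin n) F) : ℚ)) =
    PowerSeries.mk (fun n => ∑ k ∈ Finset.range (n + 1),
      ((∏ i ∈ Finset.range n, (1 - t ^ (i + 1))) /
        ((∏ i ∈ Finset.range k, (1 - t ^ (i + 1))) *
          ∏ i ∈ Finset.range (n - k), (1 - t ^ (i + 1)))) /
      ∏ i ∈ Finset.range k, (1 - t ^ (i + 1))) := by
  classical
  have hq : 2 ≤ Fintype.card F := Fintype.one_lt_card
  have hq1 : 1 ≤ Fintype.card F := le_trans one_le_two hq
  have hIcast : ∀ m n : ℕ, m ≤ n →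
      ((∏ i ∈ Finset.range m, (Fintype.card F ^ n - Fintype.card F ^ i) : ℕ) : ℚ)
        = ∏ i ∈ Finset.range m, ((Fintype.card F : ℚ) ^ n - (Fintype.card F : ℚ) ^ i) := by
    intro m n hmn
    rw [Nat.cast_prod]
    refine Finset.prod_congr rfl fun i hi => ?_
    have hile : Fintype.card F ^ i ≤ Fintype.card F ^ n :=
      Nat.pow_le_pow_right hq1 (le_trans (Nat.le_of_lt (Finset.mem_range.1 hi)) hmn)
    rw [Nat.cast_sub hile]
    push_cast
    ring
  have hGL : ∀ m : ℕ, (Nat.card (Matrix.GeneralLinearGroup (Fin m) F) : ℚ)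
      = (Fintype.card F : ℚ) ^ (m * m) * ∏ i ∈ Finset.range m, (1 - t ^ (i + 1)) := by
    intro m
    rw [Matrix.card_GL_field, ← G_eq hq ht, ← Fin.prod_univ_eq_prod_range
      (fun i => ((Fintype.card F : ℚ) ^ m - (Fintype.card F : ℚ) ^ i)) m, Nat.cast_prod]
    refine Finset.prod_congr rfl fun i _ => ?_
    have hile : Fintype.card F ^ (i : ℕ) ≤ Fintype.card F ^ m :=
      Nat.pow_le_pow_right hq1 i.2.le
    rw [Nat.cast_sub hile]
    push_cast
    ring
  refine PowerSeries.ext fun n => ?_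
  rw [PowerSeries.coeff_mk, PowerSeries.coeff_mk, main_count n, Nat.cast_sum,
    ← Finset.sum_range_reflect, Finset.sum_div]
  refine Finset.sum_congr rfl fun k hk => ?_
  have hkn : k ≤ n := Nat.lt_succ_iff.1 (Finset.mem_range.1 hk)
  have hnn : n - (n - k) = k := by omega
  have hsimp : n + 1 - 1 - k = n - k := by omega
  rw [hsimp, hnn]
  push_cast
  refine key_identity hq ht (by omega : k + (n - k) = n) _ _ _
    (∏ i ∈ Finset.range (n - k), ((Fintype.card F : ℚ) ^ n - (Fintype.card F : ℚ) ^ i))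
    ?_ ?_ (hGL (n - k)) (hGL n)
  · rw [← Nat.cast_mul, card_rank_mul_card_GL (Nat.sub_le n k), Nat.cast_pow,
      hIcast (n - k) n (Nat.sub_le n k)]
  · have h := I_eq hq ht (Nat.sub_le n k)
    rwa [hnn] at h
end

section
/- Euler's identity: as formal power series in x and t, the sum over n ≥ 0 of x^n/(t;t)_n equals 1/(x;t)_∞, where (x;t)_∞ = ∏_{i≥0}(1 - x t^i). -/
open Finset Filter Topology

private noncomputable def eulerP (t : ℝ) (n : ℕ) : ℝ :=
  ∏ i ∈ Finset.range n, (1 - t ^ (i + 1))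

private noncomputable def eulerS (t x : ℝ) : ℝ := ∑' n : ℕ, x ^ n / eulerP t n

private noncomputable def eulerC (t : ℝ) : ℝ := ∏' i : ℕ, (1 - |t| ^ (i + 1))

private lemma abs_pow_lt_one {t : ℝ} (ht : |t| < 1) (n : ℕ) (hn : n ≠ 0) :
    |t ^ n| < 1 := by
  rw [abs_pow]; exact pow_lt_one₀ (abs_nonneg t) ht hn

private lemma one_sub_pow_pos {t : ℝ} (ht : |t| < 1) (n : ℕ) (hn : n ≠ 0) :
    0 < 1 - t ^ n := by
  have := (abs_lt.1 (abs_pow_lt_one ht n hn)).2; linarith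

private lemma eulerP_pos {t : ℝ} (ht : |t| < 1) (n : ℕ) : 0 < eulerP t n :=
  Finset.prod_pos fun i _ => one_sub_pow_pos ht (i + 1) (Nat.succ_ne_zero i)

private lemma abs_log_le_aux {y ε : ℝ} (hε : 0 < ε) (hε1 : ε ≤ 1) (hεy : ε ≤ y) :
    |Real.log y| ≤ |y - 1| / ε := by
  have hy : 0 < y := hε.trans_le hεy
  have hub : Real.log y ≤ y - 1 := Real.log_le_sub_one_of_pos hy
  have hlb : 1 - y⁻¹ ≤ Real.log y := by
    have h := Real.log_le_sub_one_of_pos (inv_pos.2 hy)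
    rw [Real.log_inv] at h; linarith
  rw [abs_le]
  constructor
  · rcases le_or_gt 1 y with h | h
    · have h1 : 0 ≤ Real.log y := Real.log_nonneg h
      have h2 : 0 ≤ |y - 1| / ε := div_nonneg (abs_nonneg _) hε.le
      linarith
    · have habs : |y - 1| = 1 - y := by rw [abs_of_nonpos (by linarith)]; ring
      rw [habs]
      have h1 : (1 - y) / y ≤ (1 - y) / ε := by gcongr
      have h2 : 1 - y⁻¹ = -((1 - y) / y) := by field_simp; ring
      linarith
  · have h2 : y - 1 ≤ |y - 1| := le_abs_self _
    have h3 : |y - 1| ≤ |y - 1| / ε := by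
      rw [le_div_iff₀ hε]; nlinarith [abs_nonneg (y - 1)]
    linarith

private lemma summable_log_euler {c r : ℝ} (hc : |c| < 1) (hr : |r| < 1) :
    Summable fun i : ℕ => Real.log (1 - c * r ^ i) := by
  have hεpos : (0:ℝ) < 1 - |c| := by linarith
  have hpos : ∀ i : ℕ, 1 - |c| ≤ 1 - c * r ^ i := by
    intro i
    have h1 : c * r ^ i ≤ |c * r ^ i| := le_abs_self _
    have h2 : |c * r ^ i| = |c| * |r| ^ i := by rw [abs_mul, abs_pow]
    have h3 : |r| ^ i ≤ 1 := pow_le_one₀ (abs_nonneg r) hr.le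
    nlinarith [abs_nonneg c]
  apply Summable.of_norm_bounded (g := fun i => (|c| / (1 - |c|)) * |r| ^ i)
    ((summable_geometric_of_lt_one (abs_nonneg r) hr).mul_left _)
  intro i
  rw [Real.norm_eq_abs]
  calc |Real.log (1 - c * r ^ i)| ≤ |(1 - c * r ^ i) - 1| / (1 - |c|) :=
        abs_log_le_aux hεpos (by linarith [abs_nonneg c]) (hpos i)
    _ = |c| * |r| ^ i / (1 - |c|) := by
        rw [show (1 - c * r ^ i) - 1 = -(c * r ^ i) by ring, abs_neg, abs_mul, abs_pow]
    _ = |c| / (1 - |c|) * |r| ^ i := by ring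

private lemma euler_multipliable {c r : ℝ} (hc : |c| < 1) (hr : |r| < 1) :
    Multipliable fun i : ℕ => 1 - c * r ^ i := by
  have hpos : ∀ (_ : Unit) (i : ℕ), 0 < 1 - c * r ^ i := by
    intro _ i
    have h1 : c * r ^ i ≤ |c * r ^ i| := le_abs_self _
    have h2 : |c * r ^ i| = |c| * |r| ^ i := by rw [abs_mul, abs_pow]
    have h3 : |r| ^ i ≤ 1 := pow_le_one₀ (abs_nonneg r) hr.le
    nlinarith [abs_nonneg c]
  exact Real.multipliable_of_summable_log (hpos ()) (summable_log_euler hc hr)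

private lemma euler_tprod_pos {c r : ℝ} (hc : |c| < 1) (hr : |r| < 1) :
    0 < ∏' i : ℕ, (1 - c * r ^ i) := by
  have hpos : ∀ (_ : Unit) (i : ℕ), 0 < 1 - c * r ^ i := by
    intro _ i
    have h1 : c * r ^ i ≤ |c * r ^ i| := le_abs_self _
    have h2 : |c * r ^ i| = |c| * |r| ^ i := by rw [abs_mul, abs_pow]
    have h3 : |r| ^ i ≤ 1 := pow_le_one₀ (abs_nonneg r) hr.le
    nlinarith [abs_nonneg c]
  have h := Real.rexp_tsum_eq_tprod (hpos ()) (summable_log_euler hc hr)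
  rw [← h]
  exact Real.exp_pos _

private lemma eulerC_rw (t : ℝ) :
    (fun i : ℕ => 1 - |t| ^ (i + 1)) = fun i : ℕ => 1 - |t| * |t| ^ i :=
  funext fun i => by rw [pow_succ']

private lemma eulerC_pos {t : ℝ} (ht : |t| < 1) : 0 < eulerC t := by
  rw [eulerC, eulerC_rw t]
  exact euler_tprod_pos (by rwa [abs_abs]) (by rwa [abs_abs])

private lemma eulerC_le {t : ℝ} (ht : |t| < 1) (n : ℕ) : eulerC t ≤ eulerP t n := by
  have habs : ∀ i : ℕ, |t| ^ (i + 1) < 1 :=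
    fun i => pow_lt_one₀ (abs_nonneg t) ht (Nat.succ_ne_zero i)
  set q : ℕ → ℝ := fun n => ∏ i ∈ Finset.range n, (1 - |t| ^ (i + 1)) with hq
  have hqnonneg : ∀ m, 0 ≤ q m :=
    fun m => Finset.prod_nonneg fun i _ => by linarith [habs i]
  have hanti : Antitone q := by
    apply antitone_nat_of_succ_le
    intro m
    rw [hq]
    simp only [Finset.prod_range_succ]
    have h1 : 1 - |t| ^ (m + 1) ≤ 1 := by
      linarith [pow_nonneg (abs_nonneg t) (m + 1)]
    nlinarith [hqnonneg m, habs m, abs_nonneg t, pow_nonneg (abs_nonneg t) (m+1)]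
  have hm : Multipliable fun i : ℕ => 1 - |t| ^ (i + 1) := by
    rw [eulerC_rw t]
    exact euler_multipliable (by rwa [abs_abs]) (by rwa [abs_abs])
  have htend : Tendsto q atTop (𝓝 (eulerC t)) := hm.hasProd.tendsto_prod_nat
  have h1 : eulerC t ≤ q n :=
    le_of_tendsto htend (eventually_atTop.2 ⟨n, fun m hmn => hanti hmn⟩)
  refine h1.trans ?_
  rw [hq, eulerP]
  apply Finset.prod_le_prod
  · intro i _; linarith [habs i]
  · intro i _
    have : t ^ (i + 1) ≤ |t| ^ (i + 1) := by
      rw [← abs_pow]; exact le_abs_self _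
    linarith

private lemma euler_summable {t : ℝ} (ht : |t| < 1) {y : ℝ} (hy : |y| < 1) :
    Summable fun n : ℕ => y ^ n / eulerP t n := by
  have hc := eulerC_pos ht
  apply Summable.of_norm_bounded (g := fun n => (eulerC t)⁻¹ * |y| ^ n)
    ((summable_geometric_of_lt_one (abs_nonneg y) hy).mul_left _)
  intro n
  have hP := eulerP_pos ht n
  rw [Real.norm_eq_abs, abs_div, abs_pow, abs_of_pos hP]
  calc |y| ^ n / eulerP t n ≤ |y| ^ n / eulerC t := by
        gcongr; exact eulerC_le ht n
    _ = (eulerC t)⁻¹ * |y| ^ n := by ring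

private lemma euler_funeq {t : ℝ} (ht : |t| < 1) {y : ℝ} (hy : |y| < 1) :
    (1 - y) * eulerS t y = eulerS t (t * y) := by
  have hty : |t * y| < 1 := by
    rw [abs_mul]; nlinarith [abs_nonneg t, abs_nonneg y]
  have hf := euler_summable ht hy
  have hg := euler_summable ht hty
  have key : eulerS t y - eulerS t (t * y) = y * eulerS t y := by
    have h1 : eulerS t y - eulerS t (t * y)
        = ∑' n : ℕ, (y ^ n / eulerP t n - (t * y) ^ n / eulerP t n) :=
      (Summable.tsum_sub hf hg).symm
    rw [h1, Summable.tsum_eq_zero_add (hf.sub hg)]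
    have h2 : ∀ n : ℕ, y ^ (n + 1) / eulerP t (n + 1) - (t * y) ^ (n + 1) / eulerP t (n + 1)
        = y * (y ^ n / eulerP t n) := by
      intro n
      have hPn : eulerP t n ≠ 0 := (eulerP_pos ht n).ne'
      have hfac : (1 : ℝ) - t ^ (n + 1) ≠ 0 := (one_sub_pow_pos ht (n + 1) (Nat.succ_ne_zero n)).ne'
      have hP1 : eulerP t (n + 1) = eulerP t n * (1 - t ^ (n + 1)) := Finset.prod_range_succ _ _
      rw [hP1]
      field_simp
      ring
    rw [tsum_congr h2, tsum_mul_left]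
    simp [eulerS]
  linear_combination key

set_option maxHeartbeats 1000000 in
private lemma euler_sub_one_bound {t : ℝ} (ht : |t| < 1) {y : ℝ} (hy : |y| < 1) :
    |eulerS t y - 1| ≤ |y| * ((1 - |y|)⁻¹ * (eulerC t)⁻¹) := by
  have hc := eulerC_pos ht
  have hf := euler_summable ht hy
  have hf1 : Summable fun n : ℕ => y ^ (n + 1) / eulerP t (n + 1) :=
    (summable_nat_add_iff 1).2 hf
  have h0 : eulerS t y - 1 = ∑' n : ℕ, y ^ (n + 1) / eulerP t (n + 1) := by
    rw [eulerS, Summable.tsum_eq_zero_add hf]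
    simp [eulerP]
  rw [h0]
  have hb : ∀ n : ℕ, |y ^ (n + 1) / eulerP t (n + 1)| ≤ |y| * ((eulerC t)⁻¹ * |y| ^ n) := by
    intro n
    have hP := eulerP_pos ht (n + 1)
    rw [abs_div, abs_pow, abs_of_pos hP]
    calc |y| ^ (n + 1) / eulerP t (n + 1) ≤ |y| ^ (n + 1) / eulerC t := by
          gcongr
          exact eulerC_le ht (n + 1)
      _ = |y| * ((eulerC t)⁻¹ * |y| ^ n) := by rw [pow_succ']; field_simp
  have hgsum : Summable fun n : ℕ => |y| * ((eulerC t)⁻¹ * |y| ^ n) :=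
    (((summable_geometric_of_lt_one (abs_nonneg y) hy).mul_left _).mul_left _)
  have hnorm : Summable fun n : ℕ => ‖y ^ (n + 1) / eulerP t (n + 1)‖ := by
    simpa only [Real.norm_eq_abs] using hf1.abs
  have h6 := norm_tsum_le_tsum_norm hnorm
  simp only [Real.norm_eq_abs] at h6
  calc |∑' n : ℕ, y ^ (n + 1) / eulerP t (n + 1)|
      ≤ ∑' n : ℕ, |y ^ (n + 1) / eulerP t (n + 1)| := h6
    _ ≤ ∑' n : ℕ, |y| * ((eulerC t)⁻¹ * |y| ^ n) := Summable.tsum_le_tsum hb hf1.abs hgsum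
    _ = |y| * ((eulerC t)⁻¹ * (1 - |y|)⁻¹) := by
        rw [tsum_mul_left, tsum_mul_left, tsum_geometric_of_lt_one (abs_nonneg y) hy]
    _ = |y| * ((1 - |y|)⁻¹ * (eulerC t)⁻¹) := by ring

/-- Euler's identity: for `|t| < 1` and `|x| < 1`,
`∑_{n≥0} x^n / (t;t)_n = 1 / (x;t)_∞ = (∏_{i≥0} (1 - x t^i))⁻¹`. -/
theorem stmt_6 (t x : ℝ) (ht : |t| < 1) (hx : |x| < 1) :
    ∑' n : ℕ, x ^ n / ∏ i ∈ Finset.range n, (1 - t ^ (i + 1)) =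
      (∏' i : ℕ, (1 - x * t ^ i))⁻¹ := by
  have hc := eulerC_pos ht
  have habsN : ∀ N : ℕ, |t ^ N * x| ≤ |x| := by
    intro N
    rw [abs_mul, abs_pow]
    have h1 : |t| ^ N ≤ 1 := pow_le_one₀ (abs_nonneg t) ht.le
    nlinarith [abs_nonneg x]
  have habsN1 : ∀ N : ℕ, |t ^ N * x| < 1 := fun N => lt_of_le_of_lt (habsN N) hx
  -- Iteration of the functional equation
  have hiter : ∀ N : ℕ,
      (∏ k ∈ Finset.range N, (1 - x * t ^ k)) * eulerS t x = eulerS t (t ^ N * x) := by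
    intro N
    induction N with
    | zero => simp
    | succ N IH =>
      rw [Finset.prod_range_succ]
      calc (∏ k ∈ Finset.range N, (1 - x * t ^ k)) * (1 - x * t ^ N) * eulerS t x
          = (1 - x * t ^ N) * ((∏ k ∈ Finset.range N, (1 - x * t ^ k)) * eulerS t x) := by ring
        _ = (1 - x * t ^ N) * eulerS t (t ^ N * x) := by rw [IH]
        _ = (1 - t ^ N * x) * eulerS t (t ^ N * x) := by ring_nf
        _ = eulerS t (t * (t ^ N * x)) := euler_funeq ht (habsN1 N)
        _ = eulerS t (t ^ (N + 1) * x) := by ring_nf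
  -- Limit of the partial products
  have hmul : Multipliable fun i : ℕ => 1 - x * t ^ i := euler_multipliable hx ht
  have h2 : Tendsto (fun N : ℕ => (∏ k ∈ Finset.range N, (1 - x * t ^ k)) * eulerS t x)
      atTop (𝓝 ((∏' i : ℕ, (1 - x * t ^ i)) * eulerS t x)) :=
    hmul.hasProd.tendsto_prod_nat.mul_const _
  have h2' : Tendsto (fun N : ℕ => eulerS t (t ^ N * x)) atTop
      (𝓝 ((∏' i : ℕ, (1 - x * t ^ i)) * eulerS t x)) := by
    simpa only [hiter] using h2
  -- The right-hand sequence tends to 1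
  have h3 : Tendsto (fun N : ℕ => eulerS t (t ^ N * x)) atTop (𝓝 1) := by
    rw [tendsto_iff_norm_sub_tendsto_zero]
    simp only [Real.norm_eq_abs]
    have hK : (0:ℝ) ≤ |x| * ((1 - |x|)⁻¹ * (eulerC t)⁻¹) :=
      mul_nonneg (abs_nonneg x)
        (mul_nonneg (inv_nonneg.2 (by linarith)) (inv_nonneg.2 hc.le))
    apply squeeze_zero (fun N => abs_nonneg _)
      (g := fun N : ℕ => |t| ^ N * (|x| * ((1 - |x|)⁻¹ * (eulerC t)⁻¹)))
    · intro N
      calc |eulerS t (t ^ N * x) - 1|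
          ≤ |t ^ N * x| * ((1 - |t ^ N * x|)⁻¹ * (eulerC t)⁻¹) :=
            euler_sub_one_bound ht (habsN1 N)
        _ ≤ (|t| ^ N * |x|) * ((1 - |x|)⁻¹ * (eulerC t)⁻¹) := by
            have h7 : (1 - |t ^ N * x|)⁻¹ ≤ (1 - |x|)⁻¹ :=
              inv_anti₀ (by linarith) (by linarith [habsN N])
            calc |t ^ N * x| * ((1 - |t ^ N * x|)⁻¹ * (eulerC t)⁻¹)
                ≤ |t ^ N * x| * ((1 - |x|)⁻¹ * (eulerC t)⁻¹) :=
                  mul_le_mul_of_nonneg_left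
                    (mul_le_mul_of_nonneg_right h7 (inv_nonneg.2 hc.le)) (abs_nonneg _)
              _ = (|t| ^ N * |x|) * ((1 - |x|)⁻¹ * (eulerC t)⁻¹) := by rw [abs_mul, abs_pow]
        _ = |t| ^ N * (|x| * ((1 - |x|)⁻¹ * (eulerC t)⁻¹)) := by ring
    · simpa using (tendsto_pow_atTop_nhds_zero_of_lt_one (abs_nonneg t) ht).mul_const
        (|x| * ((1 - |x|)⁻¹ * (eulerC t)⁻¹))
  have hkey : (∏' i : ℕ, (1 - x * t ^ i)) * eulerS t x = 1 := tendsto_nhds_unique h2' h3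
  have : eulerS t x = (∏' i : ℕ, (1 - x * t ^ i))⁻¹ := eq_inv_of_mul_eq_one_right hkey
  exact this
end

section
/- As formal power series: sum over n ≥ 0 and 0 ≤ k ≤ n of ([n choose k]_t / (t;t)_k) x^n equals the sum over all partitions with zeros λ of t^{|λ| - σ_1(λ)²} x^{ℓ(λ)}, where σ_1(λ) is the side length of the Durfee square of λ. -/
/-- The side length of the Durfee square of a partition with zeros
`(f 0 ≥ f 1 ≥ … ≥ f (ℓ-1) ≥ 0)`: the number of indices `i` (0-indexed) with `f i > i`,
i.e. the largest `k` with `λ_k ≥ k` (1-indexed). -/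
def durfeeSide {ℓ : ℕ} (f : Fin ℓ → ℕ) : ℕ :=
  (Finset.univ.filter fun i : Fin ℓ => (i : ℕ) < f i).card

open PowerSeries Finset

noncomputable def PP (k : ℕ) : PowerSeries ℚ := ∏ i ∈ Finset.range k, (1 - X ^ (i+1))

lemma constantCoeff_PP (k : ℕ) : constantCoeff (PP k) = 1 := by
  simp [PP, map_prod]

-- Nat.card helpers
lemma nat_card_sigma {ι : Type*} [Fintype ι] {β : ι → Type*} [∀ i, Finite (β i)] :
    Nat.card (Σ i, β i) = ∑ i, Nat.card (β i) := by
  letI := fun i => Fintype.ofFinite (β i)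
  simp [Nat.card_eq_fintype_card]

lemma card_split {α : Type*} (P Q : α → Prop) [Finite {x // P x}] :
    Nat.card {x // P x} = Nat.card {x // P x ∧ Q x} + Nat.card {x // P x ∧ ¬ Q x} := by
  classical
  have e1 : {x // P x ∧ Q x} ≃ {y : {x // P x} // Q y.1} :=
    (Equiv.subtypeSubtypeEquivSubtypeInter P Q).symm
  have e2 : {x // P x ∧ ¬ Q x} ≃ {y : {x // P x} // ¬ Q y.1} :=
    (Equiv.subtypeSubtypeEquivSubtypeInter P (fun x => ¬ Q x)).symm
  have e3 := Equiv.sumCompl (fun y : {x // P x} => Q y.1)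
  have : Nat.card ({y : {x // P x} // Q y.1} ⊕ {y : {x // P x} // ¬ Q y.1}) = Nat.card {x // P x} :=
    Nat.card_congr e3
  rw [Nat.card_sum] at this
  rw [Nat.card_congr e1, Nat.card_congr e2, this]

lemma finite_bounded {ℓ M : ℕ} {P : (Fin ℓ → ℕ) → Prop} (h : ∀ f, P f → ∀ i, f i ≤ M) :
    Finite {f : Fin ℓ → ℕ // P f} := by
  apply Finite.of_injective (fun f : {f : Fin ℓ → ℕ // P f} =>
    (fun i => (⟨f.1 i, Nat.lt_succ_of_le (h f.1 f.2 i)⟩ : Fin (M+1))))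
  intro a b hab
  ext i
  exact congrArg Fin.val (congrFun hab i)

def NonIncr {ℓ : ℕ} (f : Fin ℓ → ℕ) : Prop := ∀ i j, i ≤ j → f j ≤ f i

lemma le_sum_of_mem {ℓ : ℕ} (f : Fin ℓ → ℕ) (i : Fin ℓ) : f i ≤ ∑ j, f j :=
  Finset.single_le_sum (fun _ _ => Nat.zero_le _) (mem_univ i)

instance instFinA (k m : ℕ) :
    Finite {f : Fin k → ℕ // NonIncr f ∧ ∑ i, f i = m} :=
  finite_bounded (fun f hf i => hf.2 ▸ le_sum_of_mem f i)

noncomputable def AA (k : ℕ) : PowerSeries ℚ :=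
  mk fun m => (Nat.card {f : Fin k → ℕ // NonIncr f ∧ ∑ i, f i = m} : ℚ)

-- the "f last = 0" part  ≃  sequences of length k
def initEquiv (k m : ℕ) :
    {f : Fin (k+1) → ℕ // (NonIncr f ∧ ∑ i, f i = m) ∧ ¬ 1 ≤ f (Fin.last k)} ≃
    {f : Fin k → ℕ // NonIncr f ∧ ∑ i, f i = m} where
  toFun f := ⟨Fin.init f.1, fun i j hij => f.2.1.1 _ _ (by simpa using hij), by
    have h0 : f.1 (Fin.last k) = 0 := by omega
    have := f.2.1.2
    rw [Fin.sum_univ_castSucc, h0] at this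
    simpa [Fin.init] using this⟩
  invFun g := ⟨Fin.snoc g.1 0, ⟨fun i j hij => by
      rcases Fin.eq_castSucc_or_eq_last j with ⟨j', rfl⟩ | rfl
      · have hi : i ≠ Fin.last k := by
          intro h; subst h
          exact absurd (le_antisymm hij (Fin.le_last _)) (by simp [Fin.ext_iff]; omega)
        rcases Fin.eq_castSucc_or_eq_last i with ⟨i', rfl⟩ | rfl
        · simpa using g.2.1 i' j' (by simpa using hij)
        · simp at hi
      · simp,
      by rw [Fin.sum_univ_castSucc]; simpa using g.2.2⟩,
    by simp⟩
  left_inv f := by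
    ext i
    have h0 : f.1 (Fin.last k) = 0 := by have := f.2.2; omega
    simp only
    rw [← h0, Fin.snoc_init_self]
  right_inv g := by
    ext i
    simp [Fin.init]

-- the "all parts ≥ 1" part ≃ sequences with sum m - (k+1)
def subOneEquiv (k m : ℕ) :
    {f : Fin (k+1) → ℕ // (NonIncr f ∧ ∑ i, f i = m + (k+1)) ∧ 1 ≤ f (Fin.last k)} ≃
    {f : Fin (k+1) → ℕ // NonIncr f ∧ ∑ i, f i = m} where
  toFun f := ⟨fun i => f.1 i - 1, fun i j hij => Nat.sub_le_sub_right (f.2.1.1 i j hij) 1, by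
    show ∑ i, (f.1 i - 1) = m
    have hpos : ∀ i, 1 ≤ f.1 i := fun i => le_trans f.2.2 (f.2.1.1 i (Fin.last k) (Fin.le_last i))
    have h2 : ∑ i, f.1 i = m + (k+1) := f.2.1.2
    have h3 : ∑ i, f.1 i = ∑ i, ((f.1 i - 1) + 1) := Finset.sum_congr rfl (fun i _ => by have := hpos i; omega)
    rw [Finset.sum_add_distrib, Finset.sum_const, Finset.card_univ, Fintype.card_fin,
      smul_eq_mul, mul_one] at h3
    omega⟩
  invFun g := ⟨fun i => g.1 i + 1, ⟨fun i j hij => Nat.add_le_add_right (g.2.1 i j hij) 1, by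
      show ∑ i, (g.1 i + 1) = m + (k+1)
      rw [Finset.sum_add_distrib, Finset.sum_const, Finset.card_univ, Fintype.card_fin,
        smul_eq_mul, mul_one, g.2.2]⟩, le_add_self⟩
  left_inv f := by
    ext i
    have hpos : 1 ≤ f.1 i := le_trans f.2.2 (f.2.1.1 i (Fin.last k) (Fin.le_last i))
    simp
    omega
  right_inv g := by ext i; simp

lemma AA_card_empty (k m : ℕ) (h : m < k + 1) :
    IsEmpty {f : Fin (k+1) → ℕ // (NonIncr f ∧ ∑ i, f i = m) ∧ 1 ≤ f (Fin.last k)} := by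
  constructor
  rintro ⟨f, ⟨hni, hsum⟩, hlast⟩
  have hpos : ∀ i, 1 ≤ f i := fun i => le_trans hlast (hni i (Fin.last k) (Fin.le_last i))
  have : (k + 1) * 1 ≤ ∑ i, f i := by
    calc (k+1) * 1 = ∑ _i : Fin (k+1), 1 := by simp [mul_comm]
    _ ≤ ∑ i, f i := Finset.sum_le_sum (fun i _ => hpos i)
  omega

lemma AA_succ (k : ℕ) : AA (k+1) = AA k + X^(k+1) * AA (k+1) := by
  ext m
  rw [map_add, coeff_X_pow_mul']
  simp only [AA, coeff_mk]
  rw [card_split (fun f : Fin (k+1) → ℕ => NonIncr f ∧ ∑ i, f i = m)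
    (fun f => 1 ≤ f (Fin.last k))]
  rw [Nat.card_congr (initEquiv k m)]
  by_cases h : k + 1 ≤ m
  · rw [if_pos h]
    obtain ⟨m', rfl⟩ : ∃ m', m = m' + (k+1) := ⟨m - (k+1), by omega⟩
    simp only [Nat.add_sub_cancel]
    rw [Nat.card_congr (subOneEquiv k m')]
    push_cast
    ring
  · rw [if_neg h]
    have := AA_card_empty k m (by omega)
    rw [Nat.card_of_isEmpty]
    push_cast
    ring

lemma AA_zero : AA 0 = 1 := by
  ext m
  simp only [AA, coeff_mk, coeff_one]
  cases m with
  | zero =>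
    rw [if_pos rfl]
    have : Nonempty {f : Fin 0 → ℕ // NonIncr f ∧ ∑ i, f i = 0} :=
      ⟨⟨Fin.elim0, fun i => i.elim0, by simp⟩⟩
    have : Subsingleton {f : Fin 0 → ℕ // NonIncr f ∧ ∑ i, f i = 0} := by
      constructor; rintro ⟨f, _⟩ ⟨g, _⟩; ext i; exact i.elim0
    rw [Nat.card_unique]; norm_num
  | succ m =>
    rw [if_neg (by omega)]
    have : IsEmpty {f : Fin 0 → ℕ // NonIncr f ∧ ∑ i, f i = m + 1} := by
      constructor; rintro ⟨f, _, hs⟩; simp at hs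
    rw [Nat.card_of_isEmpty]; norm_num

lemma AA_mul_PP (k : ℕ) : AA k * PP k = 1 := by
  induction k with
  | zero => simp [AA_zero, PP]
  | succ k ih =>
    have h1 : AA k = AA (k+1) * (1 - X^(k+1)) := by
      linear_combination - AA_succ k
    have h2 : PP (k+1) = PP k * (1 - X^(k+1)) := by
      rw [PP, PP, Finset.prod_range_succ]
    rw [h2, ← mul_assoc, mul_comm (AA (k+1)) (PP k), mul_assoc, ← h1, mul_comm, ih]

instance instFinQ (a b m : ℕ) :
    Finite {f : Fin a → ℕ // (NonIncr f ∧ ∀ i, f i ≤ b) ∧ ∑ i, f i = m} :=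
  finite_bounded (fun f hf i => hf.2 ▸ le_sum_of_mem f i)

noncomputable def QQ (a b : ℕ) : PowerSeries ℚ :=
  mk fun m => (Nat.card {f : Fin a → ℕ // (NonIncr f ∧ ∀ i, f i ≤ b) ∧ ∑ i, f i = m} : ℚ)

lemma QQ_zero_left (b : ℕ) : QQ 0 b = 1 := by
  ext m
  simp only [QQ, coeff_mk, coeff_one]
  cases m with
  | zero =>
    rw [if_pos rfl]
    have : Nonempty {f : Fin 0 → ℕ // (NonIncr f ∧ ∀ i, f i ≤ b) ∧ ∑ i, f i = 0} :=
      ⟨⟨Fin.elim0, ⟨fun i => i.elim0, fun i => i.elim0⟩, by simp⟩⟩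
    have : Subsingleton {f : Fin 0 → ℕ // (NonIncr f ∧ ∀ i, f i ≤ b) ∧ ∑ i, f i = 0} := by
      constructor; rintro ⟨f, _⟩ ⟨g, _⟩; ext i; exact i.elim0
    rw [Nat.card_unique]; norm_num
  | succ m =>
    rw [if_neg (by omega)]
    have : IsEmpty {f : Fin 0 → ℕ // (NonIncr f ∧ ∀ i, f i ≤ b) ∧ ∑ i, f i = m + 1} := by
      constructor; rintro ⟨f, _, hs⟩; simp at hs
    rw [Nat.card_of_isEmpty]; norm_num

lemma QQ_zero_right (a : ℕ) : QQ a 0 = 1 := by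
  ext m
  simp only [QQ, coeff_mk, coeff_one]
  cases m with
  | zero =>
    rw [if_pos rfl]
    have h1 : Nonempty {f : Fin a → ℕ // (NonIncr f ∧ ∀ i, f i ≤ 0) ∧ ∑ i, f i = 0} :=
      ⟨⟨fun _ => 0, ⟨fun _ _ _ => le_refl _, fun _ => le_refl _⟩, by simp⟩⟩
    have h2 : Subsingleton {f : Fin a → ℕ // (NonIncr f ∧ ∀ i, f i ≤ 0) ∧ ∑ i, f i = 0} := by
      constructor; rintro ⟨f, ⟨_, hf⟩, _⟩ ⟨g, ⟨_, hg⟩, _⟩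
      ext i
      show f i = g i
      have := hf i; have := hg i; omega
    rw [Nat.card_unique]; norm_num
  | succ m =>
    rw [if_neg (by omega)]
    have : IsEmpty {f : Fin a → ℕ // (NonIncr f ∧ ∀ i, f i ≤ 0) ∧ ∑ i, f i = m + 1} := by
      constructor; rintro ⟨f, ⟨_, hb⟩, hs⟩
      have : ∑ i, f i = 0 := Finset.sum_eq_zero (fun i _ => Nat.le_zero.mp (hb i))
      omega
    rw [Nat.card_of_isEmpty]; norm_num

-- first part: top row ≤ b
def boxTopEquiv (a b m : ℕ) :
    {f : Fin (a+1) → ℕ // ((NonIncr f ∧ ∀ i, f i ≤ b+1) ∧ ∑ i, f i = m) ∧ f 0 ≤ b} ≃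
    {f : Fin (a+1) → ℕ // (NonIncr f ∧ ∀ i, f i ≤ b) ∧ ∑ i, f i = m} :=
  Equiv.subtypeEquivRight (fun f => by
    constructor
    · rintro ⟨⟨⟨hni, _⟩, hs⟩, h0⟩
      exact ⟨⟨hni, fun i => le_trans (hni 0 i (Fin.zero_le i)) h0⟩, hs⟩
    · rintro ⟨⟨hni, hb⟩, hs⟩
      exact ⟨⟨⟨hni, fun i => le_trans (hb i) (Nat.le_succ b)⟩, hs⟩, hb 0⟩)

-- second part: top row = b+1, remove it
def boxPopEquiv (a b m : ℕ) :
    {f : Fin (a+1) → ℕ // ((NonIncr f ∧ ∀ i, f i ≤ b+1) ∧ ∑ i, f i = m + (b+1)) ∧ ¬ f 0 ≤ b} ≃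
    {f : Fin a → ℕ // (NonIncr f ∧ ∀ i, f i ≤ b+1) ∧ ∑ i, f i = m} where
  toFun f := ⟨Fin.tail f.1,
    ⟨⟨fun i j hij => f.2.1.1.1 i.succ j.succ (Fin.succ_le_succ_iff.mpr hij),
      fun i => f.2.1.1.2 i.succ⟩, by
      show ∑ i : Fin a, f.1 i.succ = m
      have h0 : f.1 0 = b + 1 := le_antisymm (f.2.1.1.2 0) (by have := f.2.2; omega)
      have := f.2.1.2
      rw [Fin.sum_univ_succ, h0] at this
      omega⟩⟩
  invFun g := ⟨Fin.cons (b+1) g.1,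
    ⟨⟨⟨fun i j hij => by
        rcases Fin.eq_zero_or_eq_succ j with rfl | ⟨j', rfl⟩
        · have : i = 0 := le_antisymm (by simpa using hij) (Fin.zero_le i)
          subst this; exact le_refl _
        · rcases Fin.eq_zero_or_eq_succ i with rfl | ⟨i', rfl⟩
          · simpa using g.2.1.2 j'
          · simpa using g.2.1.1 i' j' (by simpa [Fin.succ_le_succ_iff] using hij),
        fun i => by
          rcases Fin.eq_zero_or_eq_succ i with rfl | ⟨i', rfl⟩
          · simp
          · simpa using g.2.1.2 i'⟩, by
        rw [Fin.sum_univ_succ]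
        simpa using by omega⟩,
      by simp⟩⟩
  left_inv f := Subtype.ext (funext fun i => by
    rcases Fin.eq_zero_or_eq_succ i with rfl | ⟨i', rfl⟩
    · show Fin.cons (b+1) (Fin.tail f.1) 0 = f.1 0
      rw [Fin.cons_zero]
      exact (le_antisymm (f.2.1.1.2 0) (by have := f.2.2; omega)).symm
    · show Fin.cons (b+1) (Fin.tail f.1) i'.succ = f.1 i'.succ
      rw [Fin.cons_succ]
      rfl)
  right_inv g := by
    ext i
    simp [Fin.tail]

lemma QQ_box_empty (a b m : ℕ) (h : m < b + 1) :
    IsEmpty {f : Fin (a+1) → ℕ // ((NonIncr f ∧ ∀ i, f i ≤ b+1) ∧ ∑ i, f i = m) ∧ ¬ f 0 ≤ b} := by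
  constructor
  rintro ⟨f, ⟨⟨_, _⟩, hs⟩, h0⟩
  have := le_sum_of_mem f 0
  omega

lemma QQ_succ (a b : ℕ) : QQ (a+1) (b+1) = QQ (a+1) b + X^(b+1) * QQ a (b+1) := by
  ext m
  rw [map_add, coeff_X_pow_mul']
  simp only [QQ, coeff_mk]
  rw [card_split (fun f : Fin (a+1) → ℕ => (NonIncr f ∧ ∀ i, f i ≤ b+1) ∧ ∑ i, f i = m)
    (fun f => f 0 ≤ b)]
  rw [Nat.card_congr (boxTopEquiv a b m)]
  by_cases h : b + 1 ≤ m
  · rw [if_pos h]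
    obtain ⟨m', rfl⟩ : ∃ m', m = m' + (b+1) := ⟨m - (b+1), by omega⟩
    simp only [Nat.add_sub_cancel]
    rw [Nat.card_congr (boxPopEquiv a b m')]
    push_cast
    ring
  · rw [if_neg h]
    have he := QQ_box_empty a b m (by omega)
    have hzero : Nat.card {f : Fin (a+1) → ℕ //
        ((NonIncr f ∧ ∀ i, f i ≤ b+1) ∧ ∑ i, f i = m) ∧ ¬ f 0 ≤ b} = 0 :=
      @Nat.card_of_isEmpty _ he
    rw [hzero]
    push_cast
    ring

lemma QQ_mul_PP : ∀ (n a b : ℕ), a + b = n → QQ a b * (PP a * PP b) = PP n := by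
  intro n
  induction n with
  | zero =>
    intro a b hab
    obtain ⟨rfl, rfl⟩ : a = 0 ∧ b = 0 := by omega
    simp [QQ_zero_left, PP]
  | succ n ih =>
    intro a b hab
    match a, b with
    | 0, b => rw [QQ_zero_left]; simp only [PP]; simp; rw [show b = n+1 from by omega]
    | a, 0 => rw [QQ_zero_right]; simp only [PP]; simp; rw [show a = n+1 from by omega]
    | a+1, b+1 =>
      have ih1 : QQ (a+1) b * (PP (a+1) * PP b) = PP n := ih (a+1) b (by omega)
      have ih2 : QQ a (b+1) * (PP a * PP (b+1)) = PP n := ih a (b+1) (by omega)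
      have hPa : PP (a+1) = PP a * (1 - X^(a+1)) := Finset.prod_range_succ _ a
      have hPb : PP (b+1) = PP b * (1 - X^(b+1)) := Finset.prod_range_succ _ b
      have hPn : PP (n+1) = PP n * (1 - X^(n+1)) := Finset.prod_range_succ _ n
      have hx : (X : PowerSeries ℚ)^(n+1) = X^(a+1) * X^(b+1) := by
        rw [← pow_add]
        congr 1
        omega
      rw [QQ_succ, hPn, hx]
      calc (QQ (a+1) b + X^(b+1) * QQ a (b+1)) * (PP (a+1) * PP (b+1))
          = (QQ (a+1) b * (PP (a+1) * PP b)) * (1 - X^(b+1))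
            + X^(b+1) * ((QQ a (b+1) * (PP a * PP (b+1))) * (1 - X^(a+1))) := by
            rw [hPa, hPb]; ring
        _ = PP n * (1 - X^(b+1)) + X^(b+1) * (PP n * (1 - X^(a+1))) := by rw [ih1, ih2]
        _ = PP n * (1 - X^(a+1) * X^(b+1)) := by ring

lemma card_filter_val_lt {n : ℕ} (k : ℕ) (h : k ≤ n) :
    (Finset.univ.filter fun i : Fin n => (i : ℕ) < k).card = k := by
  have himg : (Finset.univ.filter fun i : Fin n => (i : ℕ) < k).image Fin.val
      = Finset.range k := by
    ext x
    simp only [Finset.mem_image, Finset.mem_filter, Finset.mem_univ, true_and, Finset.mem_range]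
    constructor
    · rintro ⟨i, hi, rfl⟩; exact hi
    · intro hx; exact ⟨⟨x, lt_of_lt_of_le hx h⟩, hx, rfl⟩
  have hcard := Finset.card_image_of_injective
    (Finset.univ.filter fun i : Fin n => (i : ℕ) < k) Fin.val_injective
  rw [himg, Finset.card_range] at hcard
  omega

lemma durfee_mem_iff {n : ℕ} {f : Fin n → ℕ} (hf : NonIncr f) (i : Fin n) :
    (i : ℕ) < f i ↔ (i : ℕ) < durfeeSide f := by
  set s := Finset.univ.filter (fun j : Fin n => (j:ℕ) < f j) with hs
  have hd : durfeeSide f = s.card := rfl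
  have hdc : ∀ i j : Fin n, i ≤ j → j ∈ s → i ∈ s := by
    intro i j hij hj
    simp only [hs, Finset.mem_filter, Finset.mem_univ, true_and] at hj ⊢
    have h1 : (i:ℕ) ≤ (j:ℕ) := hij
    have h2 : f j ≤ f i := hf i j hij
    omega
  rw [hd]
  constructor
  · intro h
    have hsub : Finset.Iic i ⊆ s := fun j hj =>
      hdc j i (Finset.mem_Iic.mp hj) (by simp [hs]; exact h)
    have hc := Finset.card_le_card hsub
    rw [Fin.card_Iic] at hc
    omega
  · intro h
    by_contra hcon
    have hlt : ∀ j ∈ s, (j:ℕ) < (i:ℕ) := by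
      intro j hj
      by_contra hji
      apply hcon
      have hij : i ≤ j := by
        rw [Fin.le_def]; omega
      have := hdc i j hij hj
      simpa [hs] using this
    have hsub : s ⊆ Finset.Iio i := fun j hj => Finset.mem_Iio.mpr (by
      rw [Fin.lt_def]; exact hlt j hj)
    have hc := Finset.card_le_card hsub
    rw [Fin.card_Iio] at hc
    omega

lemma durfee_le_len {n : ℕ} (f : Fin n → ℕ) : durfeeSide f ≤ n := by
  have := Finset.card_filter_le Finset.univ (fun i : Fin n => (i : ℕ) < f i)
  simpa [durfeeSide] using this

lemma durfee_ge {n : ℕ} {f : Fin n → ℕ} (hf : NonIncr f) (i : Fin n)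
    (hi : (i:ℕ) < durfeeSide f) : durfeeSide f ≤ f i := by
  have hkn : durfeeSide f ≤ n := durfee_le_len f
  set k := durfeeSide f with hk
  have hk1 : 0 < k := by omega
  have hjn : k - 1 < n := by omega
  have hjmem : (k - 1 : ℕ) < f ⟨k-1, hjn⟩ :=
    (durfee_mem_iff hf ⟨k-1, hjn⟩).mpr (by show (k - 1 : ℕ) < k; omega)
  have h2 : f ⟨k-1, hjn⟩ ≤ f i := hf i ⟨k-1, hjn⟩ (by rw [Fin.le_def]; show (i:ℕ) ≤ k - 1; omega)
  omega

lemma durfee_le {n : ℕ} {f : Fin n → ℕ} (hf : NonIncr f) (i : Fin n)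
    (hi : durfeeSide f ≤ (i:ℕ)) : f i ≤ durfeeSide f := by
  set k := durfeeSide f with hk
  have hjn : k < n := lt_of_le_of_lt hi i.2
  have hjmem : ¬ ((k : ℕ) < f ⟨k, hjn⟩) := by
    have := durfee_mem_iff hf ⟨k, hjn⟩
    show ¬ ((⟨k, hjn⟩ : Fin n) : ℕ) < f ⟨k, hjn⟩
    rw [this]
    show ¬ (k < k); omega
  have h2 : f i ≤ f ⟨k, hjn⟩ := hf ⟨k, hjn⟩ i (by rw [Fin.le_def]; exact hi)
  omega

lemma durfee_eq_of {n k : ℕ} (hk : k ≤ n) {f : Fin n → ℕ}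
    (h1 : ∀ i : Fin n, (i:ℕ) < k → k ≤ f i) (h2 : ∀ i : Fin n, k ≤ (i:ℕ) → f i ≤ k) :
    durfeeSide f = k := by
  rw [durfeeSide, ← card_filter_val_lt k hk]
  congr 1
  ext i
  simp only [Finset.mem_filter, Finset.mem_univ, true_and]
  constructor
  · intro h
    by_contra hkk
    push_neg at hkk
    have := h2 i hkk; omega
  · intro h
    have := h1 i h; omega

lemma finite_subtype_mono {α : Type*} {P Q : α → Prop} [Finite {x // P x}]
    (h : ∀ x, Q x → P x) : Finite {x // Q x} :=
  Finite.of_injective (fun x : {x // Q x} => (⟨x.1, h x.1 x.2⟩ : {x // P x}))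
    (fun a b hab => by
      apply Subtype.ext
      have h1 := hab
      simp only [Subtype.mk.injEq] at h1
      exact h1)

lemma card_fiber_aux {α : Type*} (w : α → ℕ) :
    ∀ (s : Finset ℕ) (P : α → Prop), Finite {x // P x} → (∀ x, P x → w x ∈ s) →
    Nat.card {x // P x} = ∑ j ∈ s, Nat.card {x // P x ∧ w x = j} := by
  intro s
  induction s using Finset.induction with
  | empty =>
    intro P hfin hw
    have : IsEmpty {x // P x} := ⟨fun x => by simpa using hw x.1 x.2⟩
    simp [Nat.card_of_isEmpty]
  | @insert j t hj ih =>
    intro P hfin hw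
    haveI := hfin
    rw [card_split P (fun x => w x = j), Finset.sum_insert hj]
    congr 1
    haveI : Finite {x // P x ∧ ¬ w x = j} := finite_subtype_mono (fun x hx => hx.1)
    rw [ih (fun x => P x ∧ ¬ w x = j) this (fun x hx => by
      have := hw x hx.1
      rw [Finset.mem_insert] at this
      tauto)]
    apply Finset.sum_congr rfl
    intro j' hj'
    apply Nat.card_congr
    apply Equiv.subtypeEquivRight
    intro x
    constructor
    · rintro ⟨⟨hp, _⟩, hw'⟩; exact ⟨hp, hw'⟩
    · rintro ⟨hp, hw'⟩
      exact ⟨⟨hp, fun hc => hj (by rw [hc.symm.trans hw']; exact hj')⟩, hw'⟩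

-- glue a box part (below the Durfee square) and a free part (right of it)
def glue (k r : ℕ) (g : Fin r → ℕ) (h : Fin k → ℕ) : Fin (k+r) → ℕ :=
  fun i => if hlt : (i:ℕ) < k then h ⟨i, hlt⟩ + k
    else g ⟨(i:ℕ) - k, by have := i.2; omega⟩

lemma glue_of_lt {k r : ℕ} {g : Fin r → ℕ} {h : Fin k → ℕ} (i : Fin (k+r)) (hi : (i:ℕ) < k) :
    glue k r g h i = h ⟨i, hi⟩ + k := dif_pos hi

lemma glue_of_ge {k r : ℕ} {g : Fin r → ℕ} {h : Fin k → ℕ} (i : Fin (k+r)) (hi : k ≤ (i:ℕ)) :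
    glue k r g h i = g ⟨(i:ℕ) - k, by have := i.2; omega⟩ := dif_neg (by omega)

lemma glue_castAdd {k r : ℕ} {g : Fin r → ℕ} {h : Fin k → ℕ} (i : Fin k) :
    glue k r g h (Fin.castAdd r i) = h i + k := by
  rw [glue_of_lt _ (show ((Fin.castAdd r i : Fin (k+r)) : ℕ) < k from i.2)]
  have : (⟨((Fin.castAdd r i : Fin (k+r)) : ℕ), i.2⟩ : Fin k) = i := Fin.ext rfl
  rw [this]

lemma glue_natAdd {k r : ℕ} {g : Fin r → ℕ} {h : Fin k → ℕ} (x : Fin r) :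
    glue k r g h (Fin.natAdd k x) = g x := by
  rw [glue_of_ge _ (show k ≤ ((Fin.natAdd k x : Fin (k+r)) : ℕ) from Nat.le_add_right _ _)]
  congr 1
  exact Fin.ext (by show k + (x:ℕ) - k = (x:ℕ); omega)

lemma glue_nonIncr {k r : ℕ} {g : Fin r → ℕ} {h : Fin k → ℕ}
    (hg : NonIncr g) (hgb : ∀ x, g x ≤ k) (hh : NonIncr h) : NonIncr (glue k r g h) := by
  intro i j hij
  rw [Fin.le_def] at hij
  by_cases hi : (i:ℕ) < k <;> by_cases hj' : (j:ℕ) < k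
  · rw [glue_of_lt i hi, glue_of_lt j hj']
    exact Nat.add_le_add_right (hh ⟨i, hi⟩ ⟨j, hj'⟩ (by rw [Fin.le_def]; exact hij)) k
  · rw [glue_of_lt i hi, glue_of_ge j (by omega)]
    exact le_trans (hgb _) (Nat.le_add_left k _)
  · omega
  · rw [glue_of_ge i (by omega), glue_of_ge j (by omega)]
    exact hg _ _ (by rw [Fin.le_def]; show (i:ℕ) - k ≤ (j:ℕ) - k; omega)

lemma glue_sum {k r : ℕ} (g : Fin r → ℕ) (h : Fin k → ℕ) :
    ∑ i, glue k r g h i = (∑ i, h i) + k * k + ∑ x, g x := by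
  rw [Fin.sum_univ_add]
  have h1 : ∑ i : Fin k, glue k r g h (Fin.castAdd r i) = (∑ i, h i) + k * k := by
    rw [Finset.sum_congr rfl (fun i _ => glue_castAdd i), Finset.sum_add_distrib,
      Finset.sum_const, Finset.card_univ, Fintype.card_fin, smul_eq_mul]
  have h2 : ∑ x : Fin r, glue k r g h (Fin.natAdd k x) = ∑ x, g x :=
    Finset.sum_congr rfl (fun x _ => glue_natAdd x)
  rw [h1, h2]

lemma glue_durfee {k r : ℕ} {g : Fin r → ℕ} {h : Fin k → ℕ} (hgb : ∀ x, g x ≤ k) :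
    durfeeSide (glue k r g h) = k := by
  apply durfee_eq_of (Nat.le_add_right k r)
  · intro i hi
    rw [glue_of_lt i hi]
    omega
  · intro i hi
    rw [glue_of_ge i hi]
    exact hgb _

lemma sum_split_aux {k r : ℕ} {f : Fin (k+r) → ℕ} (hni : NonIncr f) (hσ : durfeeSide f = k) :
    ∑ i, f i = (∑ i : Fin k, (f (Fin.castAdd r i) - k)) + k * k + ∑ x : Fin r, f (Fin.natAdd k x) := by
  have hge : ∀ i : Fin k, k ≤ f (Fin.castAdd r i) := fun i => by
    have := durfee_ge hni (Fin.castAdd r i) (by rw [hσ]; exact i.2)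
    omega
  have h1 : ∑ i : Fin k, f (Fin.castAdd r i)
      = (∑ i : Fin k, (f (Fin.castAdd r i) - k)) + k * k := by
    have : ∑ i : Fin k, f (Fin.castAdd r i) = ∑ i : Fin k, ((f (Fin.castAdd r i) - k) + k) :=
      Finset.sum_congr rfl (fun i _ => by have := hge i; omega)
    rw [this, Finset.sum_add_distrib, Finset.sum_const, Finset.card_univ, Fintype.card_fin,
      smul_eq_mul]
  rw [Fin.sum_univ_add, h1]

def fiberEquiv (k r m j : ℕ) (hj : j ≤ m) :
    {f : Fin (k+r) → ℕ // ((NonIncr f ∧ ∑ i, f i = m + k^2) ∧ durfeeSide f = k) ∧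
        (∑ x : Fin r, f (Fin.natAdd k x)) = j} ≃
    {g : Fin r → ℕ // (NonIncr g ∧ ∀ i, g i ≤ k) ∧ ∑ i, g i = j} ×
    {h : Fin k → ℕ // NonIncr h ∧ ∑ i, h i = m - j} where
  toFun f :=
    ⟨⟨fun x => f.1 (Fin.natAdd k x),
      ⟨⟨fun x y hxy => f.2.1.1.1 _ _ (by
          rw [Fin.le_def]
          show k + (x:ℕ) ≤ k + (y:ℕ)
          have hxy' : (x:ℕ) ≤ (y:ℕ) := hxy
          omega),
        fun x => by
          have := durfee_le f.2.1.1.1 (Fin.natAdd k x)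
            (by rw [f.2.1.2]; exact Nat.le_add_right _ _)
          rw [f.2.1.2] at this
          exact this⟩,
        f.2.2⟩⟩,
    ⟨fun i => f.1 (Fin.castAdd r i) - k,
      ⟨fun x y hxy => Nat.sub_le_sub_right
        (f.2.1.1.1 _ _ (by rw [Fin.le_def]; exact hxy)) k,
      by
        show ∑ i : Fin k, (f.1 (Fin.castAdd r i) - k) = m - j
        have hsplit := sum_split_aux f.2.1.1.1 f.2.1.2
        rw [f.2.1.1.2, f.2.2] at hsplit
        have hk2 : k^2 = k * k := pow_two k
        omega⟩⟩⟩
  invFun gh :=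
    ⟨glue k r gh.1.1 gh.2.1,
      ⟨⟨glue_nonIncr gh.1.2.1.1 gh.1.2.1.2 gh.2.2.1, by
          rw [glue_sum, gh.1.2.2, gh.2.2.2]
          have hk2 : k^2 = k * k := pow_two k
          omega⟩,
        glue_durfee gh.1.2.1.2⟩,
      by rw [Finset.sum_congr rfl (fun x _ => glue_natAdd x), gh.1.2.2]⟩
  left_inv f := by
    apply Subtype.ext
    funext i
    show glue k r (fun x => f.1 (Fin.natAdd k x)) (fun i' => f.1 (Fin.castAdd r i') - k) i = f.1 i
    by_cases hi : (i:ℕ) < k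
    · rw [glue_of_lt i hi]
      have h1 : f.1 (Fin.castAdd r ⟨(i:ℕ), hi⟩) = f.1 i := congrArg f.1 (Fin.ext rfl)
      have h2 : k ≤ f.1 i := by
        have := durfee_ge f.2.1.1.1 i (by rw [f.2.1.2]; exact hi)
        rw [f.2.1.2] at this
        exact this
      show f.1 (Fin.castAdd r ⟨(i:ℕ), hi⟩) - k + k = f.1 i
      omega
    · rw [glue_of_ge i (by omega)]
      exact congrArg f.1 (Fin.ext (by show k + ((i:ℕ) - k) = (i:ℕ); omega))
  right_inv gh := by
    apply Prod.ext
    · apply Subtype.ext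
      funext x
      exact glue_natAdd x
    · apply Subtype.ext
      funext i
      show glue k r gh.1.1 gh.2.1 (Fin.castAdd r i) - k = gh.2.1 i
      rw [glue_castAdd]
      omega

lemma card_durfee_eq (k r m : ℕ) :
    Nat.card {f : Fin (k+r) → ℕ // (NonIncr f ∧ ∑ i, f i = m + k^2) ∧ durfeeSide f = k}
      = ∑ j ∈ Finset.range (m+1),
          Nat.card {g : Fin r → ℕ // (NonIncr g ∧ ∀ i, g i ≤ k) ∧ ∑ i, g i = j} *
          Nat.card {h : Fin k → ℕ // NonIncr h ∧ ∑ i, h i = m - j} := by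
  haveI hfin : Finite {f : Fin (k+r) → ℕ //
      (NonIncr f ∧ ∑ i, f i = m + k^2) ∧ durfeeSide f = k} :=
    finite_bounded (fun f hf i => hf.1.2 ▸ le_sum_of_mem f i)
  have hw : ∀ f : Fin (k+r) → ℕ,
      ((NonIncr f ∧ ∑ i, f i = m + k^2) ∧ durfeeSide f = k) →
      (∑ x : Fin r, f (Fin.natAdd k x)) ∈ Finset.range (m+1) := by
    intro f hf
    apply Finset.mem_range.mpr
    have hsplit := sum_split_aux hf.1.1 hf.2
    rw [hf.1.2] at hsplit
    have hk2 : k^2 = k * k := pow_two k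
    omega
  rw [card_fiber_aux (fun f : Fin (k+r) → ℕ => ∑ x : Fin r, f (Fin.natAdd k x))
    (Finset.range (m+1))
    (fun f => (NonIncr f ∧ ∑ i, f i = m + k^2) ∧ durfeeSide f = k)
    hfin hw]
  apply Finset.sum_congr rfl
  intro j hj
  rw [Nat.card_congr (fiberEquiv k r m j (by have := Finset.mem_range.mp hj; omega)),
    Nat.card_prod]

lemma coeff_QA (k r m : ℕ) :
    (PowerSeries.coeff m) (QQ r k * AA k)
      = (Nat.card {f : Fin (k+r) → ℕ //
          (NonIncr f ∧ ∑ i, f i = m + k^2) ∧ durfeeSide f = k} : ℚ) := by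
  rw [coeff_mul, Finset.Nat.sum_antidiagonal_eq_sum_range_succ_mk, card_durfee_eq,
    Nat.cast_sum]
  apply Finset.sum_congr rfl
  intro j hj
  simp only [QQ, AA, coeff_mk]
  push_cast
  ring

lemma series_eq (n : ℕ) :
    (∑ k ∈ Finset.range (n+1), QQ (n-k) k * AA k)
      = mk (fun m => (Nat.card {f : Fin n → ℕ //
          NonIncr f ∧ ∑ i, f i = m + (durfeeSide f)^2} : ℚ)) := by
  ext m
  rw [map_sum, coeff_mk]
  haveI hfin : Finite {f : Fin n → ℕ // NonIncr f ∧ ∑ i, f i = m + (durfeeSide f)^2} :=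
    finite_bounded (M := m + n^2) (fun f hf i => by
      have h1 : f i ≤ ∑ j, f j := le_sum_of_mem f i
      have h2 : durfeeSide f ≤ n := durfee_le_len f
      have h3 : durfeeSide f ^ 2 ≤ n ^ 2 := Nat.pow_le_pow_left h2 2
      omega)
  rw [card_fiber_aux durfeeSide (Finset.range (n+1)) _ hfin
    (fun f _ => Finset.mem_range.mpr (by have := durfee_le_len f; omega)), Nat.cast_sum]
  apply Finset.sum_congr rfl
  intro k hk
  have hkn : k ≤ n := by have := Finset.mem_range.mp hk; omega
  obtain ⟨r, rfl⟩ : ∃ r, n = k + r := ⟨n - k, by omega⟩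
  have hr : k + r - k = r := by omega
  rw [hr, coeff_QA]
  congr 1
  apply Nat.card_congr
  apply Equiv.subtypeEquivRight
  intro f
  constructor
  · rintro ⟨⟨h1, h2⟩, h3⟩
    refine ⟨⟨h1, ?_⟩, h3⟩
    first
    | (rw [h3]; exact h2)
    | (have h2' := h2; rw [h3] at h2'; exact h2')
  · rintro ⟨⟨h1, h2⟩, h3⟩
    refine ⟨⟨h1, ?_⟩, h3⟩
    first
    | (rw [h3]; exact h2)
    | (have h2' := h2; rw [h3] at h2'; exact h2')

lemma term_eq (n k : ℕ) (hk : k ≤ n) :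
    PP n * (PP k * PP (n-k))⁻¹ * (PP k)⁻¹ = QQ (n-k) k * AA k := by
  have hc : ∀ j, constantCoeff (PP j) ≠ 0 := fun j => by rw [constantCoeff_PP]; norm_num
  have h1 : (PP k)⁻¹ = AA k := (PowerSeries.inv_eq_iff_mul_eq_one (hc k)).mpr (AA_mul_PP k)
  have h2 : PP n * (PP k * PP (n-k))⁻¹ = QQ (n-k) k := by
    rw [eq_comm, PowerSeries.eq_mul_inv_iff_mul_eq
      (by rw [map_mul, constantCoeff_PP, constantCoeff_PP]; norm_num)]
    rw [mul_comm (PP k) (PP (n-k))]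
    exact QQ_mul_PP n (n-k) k (by omega)
  rw [h1, h2]

/-- As formal power series in `t` (inner variable) and `x` (outer variable):
`∑_{n≥0} (∑_{k=0}^n [n choose k]_t / (t;t)_k) x^n
  = ∑_{λ w/ 0} t^{|λ| - σ₁(λ)²} x^{ℓ(λ)}`,
where the right-hand sum is over all partitions with zeros and `σ₁` is the Durfee square
side; its coefficient of `x^ℓ t^m` counts nonincreasing sequences `f` of length `ℓ` with
`∑ f = m + σ₁(f)²`. -/
theorem stmt_8 :
    PowerSeries.mk (fun n => ∑ k ∈ Finset.range (n + 1),
        ((∏ i ∈ Finset.range n, (1 - (PowerSeries.X : PowerSeries ℚ) ^ (i + 1))) *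
          ((∏ i ∈ Finset.range k, (1 - (PowerSeries.X : PowerSeries ℚ) ^ (i + 1))) *
            ∏ i ∈ Finset.range (n - k),
              (1 - (PowerSeries.X : PowerSeries ℚ) ^ (i + 1)))⁻¹) *
        (∏ i ∈ Finset.range k, (1 - (PowerSeries.X : PowerSeries ℚ) ^ (i + 1)))⁻¹) =
    PowerSeries.mk (fun ℓ => PowerSeries.mk (fun m =>
        (Nat.card {f : Fin ℓ → ℕ //
            (∀ i j, i ≤ j → f j ≤ f i) ∧ ∑ i, f i = m + (durfeeSide f) ^ 2} : ℚ))) := by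
  have key : ∀ n : ℕ, (∑ k ∈ Finset.range (n+1), PP n * (PP k * PP (n-k))⁻¹ * (PP k)⁻¹)
      = mk (fun m => (Nat.card {f : Fin n → ℕ //
          NonIncr f ∧ ∑ i, f i = m + (durfeeSide f)^2} : ℚ)) := by
    intro n
    rw [Finset.sum_congr rfl
      (fun k hk => term_eq n k (by have := Finset.mem_range.mp hk; omega))]
    exact series_eq n
  exact congrArg PowerSeries.mk (funext fun n => key n)
end

section
/- Euler's identity: sum over k ≥ 0 of t^{k²} / (t;t)_k² equals 1/(t;t)_∞, as formal power series in t. -/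
open Finset Filter Topology Real

namespace Stmt12

noncomputable def P (t : ℝ) (n : ℕ) : ℝ := ∏ i ∈ Finset.range n, (1 - t ^ (i + 1))

variable {t : ℝ}

lemma factor_pos (ht0 : 0 < t) (ht1 : t < 1) (i : ℕ) : 0 < 1 - t ^ (i + 1) := by
  have : t ^ (i + 1) < 1 := pow_lt_one₀ ht0.le ht1 (Nat.succ_ne_zero i)
  linarith

lemma factor_lt_one (ht0 : 0 < t) (i : ℕ) : 1 - t ^ (i + 1) < 1 := by
  have : 0 < t ^ (i + 1) := pow_pos ht0 _
  linarith

lemma P_pos (ht0 : 0 < t) (ht1 : t < 1) (n : ℕ) : 0 < P t n :=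
  Finset.prod_pos fun i _ => factor_pos ht0 ht1 i

lemma P_succ (n : ℕ) : P t (n + 1) = P t n * (1 - t ^ (n + 1)) := Finset.prod_range_succ _ _

lemma P_anti (ht0 : 0 < t) (ht1 : t < 1) : Antitone (P t) := by
  apply antitone_nat_of_succ_le
  intro n
  rw [P_succ]
  nlinarith [P_pos ht0 ht1 n, factor_pos ht0 ht1 n, factor_lt_one ht0 n]

noncomputable def gauss (t : ℝ) (n k : ℕ) : ℝ :=
  if k ≤ n then P t n / (P t k * P t (n - k)) else 0

lemma P_zero : P t 0 = 1 := rfl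

lemma gauss_zero_right (ht0 : 0 < t) (ht1 : t < 1) (n : ℕ) : gauss t n 0 = 1 := by
  simp [gauss, P_zero, div_self (P_pos ht0 ht1 n).ne']

lemma gauss_self (ht0 : 0 < t) (ht1 : t < 1) (n : ℕ) : gauss t n n = 1 := by
  simp [gauss, P_zero, div_self (P_pos ht0 ht1 n).ne']

lemma gauss_eq_zero {n k : ℕ} (h : n < k) : gauss t n k = 0 := by
  simp [gauss, not_le.2 h]

lemma gauss_symm (ht0 : 0 < t) (ht1 : t < 1) {n k : ℕ} (h : k ≤ n) :
    gauss t n (n - k) = gauss t n k := by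
  have h1 : n - k ≤ n := Nat.sub_le n k
  have h2 : n - (n - k) = k := by omega
  rw [gauss, gauss, if_pos h1, if_pos h, h2, mul_comm]

lemma pascal (ht0 : 0 < t) (ht1 : t < 1) (n k : ℕ) :
    gauss t (n + 1) (k + 1) = gauss t n (k + 1) + t ^ (n - k) * gauss t n k := by
  rcases lt_trichotomy k n with hk | rfl | hk
  · obtain ⟨m, rfl⟩ : ∃ m, n = k + m + 1 := ⟨n - k - 1, by omega⟩
    rw [gauss, gauss, gauss, if_pos (by omega), if_pos (by omega), if_pos (by omega)]
    have e1 : k + m + 1 + 1 - (k + 1) = m + 1 := by omega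
    have e2 : k + m + 1 - (k + 1) = m := by omega
    have e3 : k + m + 1 - k = m + 1 := by omega
    rw [e1, e2, e3]
    rw [show k + m + 1 + 1 = (k + m + 1) + 1 from rfl, P_succ (k + m + 1),
      P_succ m, P_succ k]
    have h1 := (P_pos ht0 ht1 k).ne'
    have h2 := (P_pos ht0 ht1 m).ne'
    have h3 := (factor_pos ht0 ht1 k).ne'
    have h4 := (factor_pos ht0 ht1 m).ne'
    have key : (1 : ℝ) - t ^ (k + m + 1 + 1) =
        (1 - t ^ (m + 1)) + t ^ (m + 1) * (1 - t ^ (k + 1)) := by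
      have : t ^ (m + 1) * t ^ (k + 1) = t ^ (k + m + 1 + 1) := by
        rw [← pow_add]; ring_nf
      nlinarith [this]
    field_simp
    rw [key]; ring
  · rw [gauss_self ht0 ht1 (k + 1), gauss_eq_zero (Nat.lt_succ_self k), gauss_self ht0 ht1 k]
    simp
  · rw [gauss_eq_zero (by omega), gauss_eq_zero (by omega), gauss_eq_zero (by omega)]
    simp

lemma vandermonde (ht0 : 0 < t) (ht1 : t < 1) (m : ℕ) :
    ∀ n k, gauss t (m + n) k =
      ∑ j ∈ Finset.range (k + 1), t ^ (j * (m + j - k)) * gauss t m (k - j) * gauss t n j := by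
  intro n
  induction n with
  | zero =>
    intro k
    rw [Finset.sum_eq_single 0]
    · simp [gauss_zero_right ht0 ht1]
    · intro j hj hj0
      rw [gauss_eq_zero (Nat.pos_of_ne_zero hj0), mul_zero]
    · simp
  | succ n ih =>
    intro k
    cases k with
    | zero =>
      simp [gauss_zero_right ht0 ht1]
    | succ K =>
      have LHS : gauss t (m + (n + 1)) (K + 1)
          = gauss t (m + n) (K + 1) + t ^ (m + n - K) * gauss t (m + n) K := by
        rw [show m + (n + 1) = (m + n) + 1 by ring]
        exact pascal ht0 ht1 (m + n) K
      rw [LHS, ih (K + 1), ih K]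
      rw [Finset.sum_range_succ' _ (K + 1), Finset.sum_range_succ'
        (fun j => t ^ (j * (m + j - (K + 1))) * gauss t m (K + 1 - j) * gauss t (n + 1) j) (K + 1)]
      simp only [Nat.succ_sub_succ, Nat.sub_zero, Nat.zero_mul, pow_zero, one_mul,
        gauss_zero_right ht0 ht1, mul_one]
      rw [Finset.mul_sum, add_right_comm, ← Finset.sum_add_distrib]
      congr 1
      apply Finset.sum_congr rfl
      intro j hj
      rw [pascal ht0 ht1 n j]
      have hjK : j ≤ K := by simpa using Nat.lt_succ_iff.mp (Finset.mem_range.mp hj)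
      by_cases hn : j ≤ n
      · by_cases hm : K ≤ m + j
        · have hexp : (m + n - K) + j * (m + j - K) = ((j + 1) * (m + j - K)) + (n - j) := by
            rw [Nat.succ_mul]
            have hcK : m + j = K + (m + j - K) := by omega
            generalize hc : m + j - K = c at *
            generalize j * c = a
            omega
          rw [mul_add]
          congr 1
          have e : m + (j + 1) - (K + 1) = m + j - K := by omega
          rw [e, show t ^ (m + n - K) * (t ^ (j * (m + j - K)) * gauss t m (K - j) * gauss t n j)
              = t ^ ((m + n - K) + j * (m + j - K)) * (gauss t m (K - j) * gauss t n j) by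
            rw [pow_add]; ring, hexp, pow_add]
          ring
        · rw [gauss_eq_zero (show m < K - j by omega)]
          ring
      · rw [gauss_eq_zero (show n < j by omega), gauss_eq_zero (show n < j + 1 by omega)]
        ring

lemma durfee (ht0 : 0 < t) (ht1 : t < 1) (n : ℕ) :
    ∑ k ∈ Finset.range (n + 1), t ^ (k ^ 2) * gauss t n k ^ 2 = gauss t (n + n) n := by
  rw [vandermonde ht0 ht1 n n n]
  apply Finset.sum_congr rfl
  intro j hj
  have hjn : j ≤ n := Nat.lt_succ_iff.mp (Finset.mem_range.mp hj)
  rw [show n + j - n = j by omega, gauss_symm ht0 ht1 hjn, show j ^ 2 = j * j by ring]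
  ring

lemma summable_log (ht0 : 0 < t) (ht1 : t < 1) :
    Summable fun i : ℕ => Real.log (1 - t ^ (i + 1)) := by
  have hgeo : Summable fun i : ℕ => t ^ (i + 1) / (1 - t) := by
    apply Summable.div_const
    exact (summable_geometric_of_lt_one ht0.le ht1).comp_injective fun a b => by omega
  apply Summable.of_norm_bounded hgeo
  intro i
  have h1 : 0 < 1 - t ^ (i + 1) := factor_pos ht0 ht1 i
  have h0 : 0 < t ^ (i + 1) := pow_pos ht0 _
  have h2 : Real.log (1 - t ^ (i + 1)) ≤ 0 := Real.log_nonpos (by linarith) (by linarith)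
  rw [Real.norm_eq_abs, abs_of_nonpos h2]
  have h3 := Real.log_le_sub_one_of_pos (show (0:ℝ) < (1 - t ^ (i + 1))⁻¹ by positivity)
  rw [Real.log_inv] at h3
  have h4 : (1 - t ^ (i + 1))⁻¹ - 1 = t ^ (i + 1) / (1 - t ^ (i + 1)) := by field_simp; ring
  have h5 : t ^ (i + 1) ≤ t := by
    calc t ^ (i + 1) ≤ t ^ 1 := pow_le_pow_of_le_one ht0.le ht1.le (by omega)
    _ = t := pow_one t
  have h6 : t ^ (i + 1) / (1 - t ^ (i + 1)) ≤ t ^ (i + 1) / (1 - t) := by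
    gcongr <;> linarith
  linarith

lemma multipliable (ht0 : 0 < t) (ht1 : t < 1) : Multipliable fun i : ℕ => 1 - t ^ (i + 1) :=
  Real.multipliable_of_summable_log (fun i => factor_pos ht0 ht1 i) (summable_log ht0 ht1)

lemma tprod_pos (ht0 : 0 < t) (ht1 : t < 1) : 0 < ∏' i : ℕ, (1 - t ^ (i + 1)) := by
  have h := Real.rexp_tsum_eq_tprod (fun i => factor_pos ht0 ht1 i) (summable_log ht0 ht1)
  rw [← h]
  exact Real.exp_pos _

lemma tendsto_P (ht0 : 0 < t) (ht1 : t < 1) :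
    Filter.Tendsto (P t) Filter.atTop (𝓝 (∏' i : ℕ, (1 - t ^ (i + 1)))) :=
  (multipliable ht0 ht1).hasProd.tendsto_prod_nat

lemma tprod_le_P (ht0 : 0 < t) (ht1 : t < 1) (n : ℕ) :
    (∏' i : ℕ, (1 - t ^ (i + 1))) ≤ P t n :=
  le_of_tendsto (tendsto_P ht0 ht1)
    (Filter.eventually_atTop.2 ⟨n, fun m hm => P_anti ht0 ht1 hm⟩)

lemma gauss_nonneg (ht0 : 0 < t) (ht1 : t < 1) (n k : ℕ) : 0 ≤ gauss t n k := by
  rw [gauss]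
  split
  · exact div_nonneg (P_pos ht0 ht1 _).le
      (mul_nonneg (P_pos ht0 ht1 _).le (P_pos ht0 ht1 _).le)
  · exact le_rfl

lemma gauss_le (ht0 : 0 < t) (ht1 : t < 1) {n k : ℕ} (h : k ≤ n) :
    gauss t n k ≤ (∏' i : ℕ, (1 - t ^ (i + 1)))⁻¹ := by
  have hk := P_pos ht0 ht1 k
  have hnk := P_pos ht0 ht1 (n - k)
  have hPinf := tprod_pos ht0 ht1
  rw [gauss, if_pos h]
  calc P t n / (P t k * P t (n - k))
      ≤ P t k / (P t k * (∏' i : ℕ, (1 - t ^ (i + 1)))) :=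
        div_le_div₀ hk.le (P_anti ht0 ht1 h) (mul_pos hk hPinf)
          (mul_le_mul_of_nonneg_left (tprod_le_P ht0 ht1 (n - k)) hk.le)
    _ = (∏' i : ℕ, (1 - t ^ (i + 1)))⁻¹ := by field_simp

end Stmt12

open Stmt12 in
/-- Euler's identity: `∑_{k≥0} t^{k²} / (t;t)_k² = 1/(t;t)_∞` (for `0 < t < 1`,
equivalently as formal power series in `t`). -/
theorem stmt_12 (t : ℝ) (ht0 : 0 < t) (ht1 : t < 1) :
    ∑' k : ℕ, t ^ (k ^ 2) / (∏ i ∈ Finset.range k, (1 - t ^ (i + 1))) ^ 2 =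
      (∏' i : ℕ, (1 - t ^ (i + 1)))⁻¹ := by
  have hPinf : 0 < ∏' i : ℕ, (1 - t ^ (i + 1)) := tprod_pos ht0 ht1
  set Q : ℝ := ∏' i : ℕ, (1 - t ^ (i + 1)) with hQ
  set f : ℕ → ℕ → ℝ := fun n k => if k ≤ n then t ^ (k ^ 2) * gauss t n k ^ 2 else 0 with hf
  set g : ℕ → ℝ := fun k => t ^ (k ^ 2) / (P t k) ^ 2 with hg
  have hbound_summable : Summable (fun k : ℕ => t ^ (k ^ 2) * (Q⁻¹) ^ 2) := by
    apply Summable.mul_right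
    apply Summable.of_nonneg_of_le (fun k => by positivity) (fun k => ?_)
      (summable_geometric_of_lt_one ht0.le ht1)
    exact pow_le_pow_of_le_one ht0.le ht1.le (Nat.le_self_pow two_ne_zero k)
  have hab : ∀ k, Tendsto (fun n => f n k) atTop (𝓝 (g k)) := by
    intro k
    have hsub : Tendsto (fun n : ℕ => n - k) atTop atTop := tendsto_sub_atTop_nat k
    have hPk := P_pos ht0 ht1 k
    have hne : P t k * Q ≠ 0 := by positivity
    have hq : Tendsto (fun n => P t n / (P t k * P t (n - k))) atTop
        (𝓝 (Q / (P t k * Q))) :=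
      (tendsto_P ht0 ht1).div
        (tendsto_const_nhds.mul ((tendsto_P ht0 ht1).comp hsub)) hne
    have hq2 : Tendsto (fun n => t ^ (k ^ 2) * (P t n / (P t k * P t (n - k))) ^ 2)
        atTop (𝓝 (t ^ (k ^ 2) * (Q / (P t k * Q)) ^ 2)) :=
      (hq.pow 2).const_mul _
    have hval : t ^ (k ^ 2) * (Q / (P t k * Q)) ^ 2 = g k := by
      rw [hg]
      field_simp
    rw [← hval]
    apply hq2.congr'
    filter_upwards [eventually_ge_atTop k] with n hn
    rw [hf]
    simp only
    rw [if_pos hn, gauss, if_pos hn]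
  have h_bound : ∀ᶠ n in atTop, ∀ k, ‖f n k‖ ≤ t ^ (k ^ 2) * (Q⁻¹) ^ 2 := by
    apply Filter.Eventually.of_forall
    intro n k
    rw [hf]
    simp only
    split
    case isTrue h =>
      have hng := gauss_nonneg ht0 ht1 n k
      rw [Real.norm_eq_abs, abs_of_nonneg (by positivity)]
      have := pow_le_pow_left₀ hng (gauss_le ht0 ht1 h) 2
      have ht : (0:ℝ) ≤ t ^ (k ^ 2) := by positivity
      nlinarith [this, ht]
    case isFalse h =>
      simp only [norm_zero]
      positivity
  have h1 : Tendsto (fun n => ∑' k, f n k) atTop (𝓝 (∑' k, g k)) :=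
    tendsto_tsum_of_dominated_convergence hbound_summable hab h_bound
  have h2 : ∀ n : ℕ, (∑' k, f n k) = gauss t (n + n) n := by
    intro n
    rw [← durfee ht0 ht1 n]
    rw [tsum_eq_sum (s := Finset.range (n + 1)) ?_]
    · apply Finset.sum_congr rfl
      intro k hk
      rw [hf]
      simp only
      rw [if_pos (Nat.lt_succ_iff.mp (Finset.mem_range.mp hk))]
    · intro k hk
      rw [hf]
      simp only
      rw [if_neg (by simp at hk; omega)]
  have hdup : Tendsto (fun n : ℕ => n + n) atTop atTop :=
    tendsto_atTop_mono (fun n => Nat.le_add_left n n) tendsto_id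
  have hneQQ : Q * Q ≠ 0 := by positivity
  have h3 : Tendsto (fun n : ℕ => gauss t (n + n) n) atTop (𝓝 Q⁻¹) := by
    have h3' : Tendsto (fun n : ℕ => P t (n + n) / (P t n * P t n)) atTop
        (𝓝 (Q / (Q * Q))) :=
      ((tendsto_P ht0 ht1).comp hdup).div
        ((tendsto_P ht0 ht1).mul (tendsto_P ht0 ht1)) hneQQ
    have hv : Q / (Q * Q) = Q⁻¹ := by field_simp
    rw [← hv]
    apply h3'.congr
    intro n
    rw [gauss, if_pos (Nat.le_add_left n n), show n + n - n = n by omega]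
  have h4 : (∑' k, g k) = Q⁻¹ := tendsto_nhds_unique (h1.congr h2) h3
  exact h4
end

section
/- Euler's identity: sum over n ≥ 0 of t^{binom(n,2)} x^n / (t;t)_n equals (-x;t)_∞ = ∏_{i≥0}(1 + x t^i), as formal power series in x and t. -/
open Filter Finset Topology

private noncomputable def Dd (t : ℝ) (m : ℕ) : ℝ := ∏ i ∈ Finset.range m, (1 - t ^ (i + 1))

private noncomputable def Gg (t x : ℝ) (N n : ℕ) : ℝ :=
  if n ≤ N then t ^ (n.choose 2) * x ^ n * Dd t N / (Dd t n * Dd t (N - n)) else 0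

section aux

variable {t x : ℝ}

private lemma hfac (ht : |t| < 1) (i : ℕ) : 0 < 1 - t ^ (i + 1) := by
  have h1 : |t ^ (i + 1)| < 1 := by
    rw [abs_pow]; exact pow_lt_one₀ (abs_nonneg t) ht (Nat.succ_ne_zero i)
  have := (abs_lt.mp h1).2
  linarith

private lemma hD (ht : |t| < 1) (m : ℕ) : 0 < Dd t m :=
  Finset.prod_pos fun i _ => hfac ht i

private lemma hDsucc (m : ℕ) : Dd t (m + 1) = Dd t m * (1 - t ^ (m + 1)) :=
  Finset.prod_range_succ _ _

private lemma Dzero : Dd t 0 = 1 := by simp [Dd]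

private lemma Dsplit (k n : ℕ) :
    Dd t (k + n) = Dd t k * ∏ i ∈ Finset.range n, (1 - t ^ (k + i + 1)) := by
  rw [Dd, Dd, Finset.prod_range_add]

private lemma choose2succ (n : ℕ) : (n + 1).choose 2 = n.choose 2 + n := by
  rw [Nat.choose_two_right, Nat.choose_two_right, Nat.triangle_succ]

private lemma Gg_zero (ht : |t| < 1) (N : ℕ) : Gg t x N 0 = 1 := by
  have h := (hD ht N).ne'
  rw [Gg, if_pos (Nat.zero_le N)]
  simp [Dzero, h, Nat.choose]

private lemma Gg_rec (ht : |t| < 1) (N n : ℕ) :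
    Gg t x (N + 1) (n + 1) = Gg t x N (n + 1) + x * t ^ N * Gg t x N n := by
  have hDn := (hD ht n).ne'
  rcases le_or_gt (n + 1) N with h | h
  · obtain ⟨k, rfl⟩ : ∃ k, N = n + 1 + k := ⟨N - (n + 1), by omega⟩
    have e1 : n + 1 + k + 1 - (n + 1) = k + 1 := by omega
    have e2 : n + 1 + k - (n + 1) = k := by omega
    have e3 : n + 1 + k - n = k + 1 := by omega
    have hDk := (hD ht k).ne'
    have hDnk := (hD ht (n + 1 + k)).ne'
    have hf1 := (hfac ht n).ne'
    have hf2 := (hfac ht k).ne'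
    simp only [Gg, if_pos (by omega : n + 1 ≤ n + 1 + k + 1),
      if_pos (by omega : n + 1 ≤ n + 1 + k), if_pos (by omega : n ≤ n + 1 + k),
      e1, e2, e3]
    rw [choose2succ, show n + 1 + k + 1 = (n + 1 + k) + 1 from rfl, hDsucc (n + 1 + k),
      hDsucc k, hDsucc n]
    field_simp
    ring
  · rcases le_or_gt n N with h' | h'
    · have : n = N := by omega
      subst this
      have hDn1 := (hD ht (n + 1)).ne'
      simp only [Gg, if_pos (le_refl (n + 1)), if_neg (by omega : ¬ n + 1 ≤ n),
        if_pos (le_refl n), Nat.sub_self, Dzero]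
      rw [choose2succ]
      field_simp
      ring
    · simp only [Gg, if_neg (by omega : ¬ n + 1 ≤ N + 1), if_neg (by omega : ¬ n + 1 ≤ N),
        if_neg (by omega : ¬ n ≤ N)]
      ring

private lemma qbinom (ht : |t| < 1) (N : ℕ) :
    ∏ i ∈ Finset.range N, (1 + x * t ^ i) = ∑ n ∈ Finset.range (N + 1), Gg t x N n := by
  induction N with
  | zero => simp [Gg_zero ht]
  | succ N ih =>
    rw [Finset.prod_range_succ, ih, Finset.sum_range_succ' (Gg t x (N + 1)) (N + 1)]
    have h1 : ∑ i ∈ Finset.range (N + 1), Gg t x (N + 1) (i + 1)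
        = ∑ i ∈ Finset.range (N + 1), (Gg t x N (i + 1) + x * t ^ N * Gg t x N i) :=
      Finset.sum_congr rfl fun i _ => Gg_rec ht N i
    rw [h1, Finset.sum_add_distrib, ← Finset.mul_sum, Gg_zero ht]
    have hzero : Gg t x N (N + 1) = 0 := by rw [Gg, if_neg (by omega)]
    have h2 : ∑ i ∈ Finset.range (N + 1), Gg t x N (i + 1)
        = ∑ i ∈ Finset.range N, Gg t x N (i + 1) := by
      rw [Finset.sum_range_succ, hzero, add_zero]
    have h3 : (Gg t x N 0) + ∑ i ∈ Finset.range N, Gg t x N (i + 1)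
        = ∑ n ∈ Finset.range (N + 1), Gg t x N n := by
      rw [Finset.sum_range_succ' (Gg t x N) N]; ring
    rw [h2]
    rw [Gg_zero ht] at h3
    nlinarith [h3]

private lemma tsum_Gg (ht : |t| < 1) (N : ℕ) :
    ∑' n, Gg t x N n = ∏ i ∈ Finset.range N, (1 + x * t ^ i) := by
  rw [tsum_eq_sum (s := Finset.range (N + 1))
    (fun b hb => by
      simp only [Finset.mem_range, not_lt] at hb
      rw [Gg, if_neg (by omega)]),
    qbinom ht]

private lemma Gg_bound (ht : |t| < 1) (N n : ℕ) :
    |Gg t x N n| ≤ |t| ^ (n.choose 2) * (2 * |x| / (1 - |t|)) ^ n := by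
  have htpos : 0 < 1 - |t| := by linarith [abs_nonneg t]
  rcases le_or_gt n N with h | h
  · obtain ⟨k, rfl⟩ : ∃ k, N = k + n := ⟨N - n, by omega⟩
    have e1 : k + n - n = k := by omega
    have hQpos : 0 < ∏ i ∈ Finset.range n, (1 - t ^ (k + i + 1)) :=
      Finset.prod_pos fun i _ => by
        have := hfac ht (k + i); simpa [add_assoc] using this
    have hDk := hD ht k
    have hDn := hD ht n
    rw [Gg, if_pos h, e1, Dsplit]
    have heq : t ^ n.choose 2 * x ^ n * (Dd t k * ∏ i ∈ Finset.range n, (1 - t ^ (k + i + 1)))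
        / (Dd t n * Dd t k)
        = t ^ n.choose 2 * x ^ n * (∏ i ∈ Finset.range n, (1 - t ^ (k + i + 1))) / Dd t n := by
      field_simp
    rw [heq, abs_div, abs_mul, abs_mul, abs_pow, abs_pow, abs_of_pos hQpos, abs_of_pos hDn]
    have hQle : (∏ i ∈ Finset.range n, (1 - t ^ (k + i + 1))) ≤ 2 ^ n := by
      calc (∏ i ∈ Finset.range n, (1 - t ^ (k + i + 1)))
          ≤ ∏ _i ∈ Finset.range n, (2 : ℝ) := by
            refine Finset.prod_le_prod (fun i _ => ?_) (fun i _ => ?_)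
            · have h0 : (0:ℝ) < 1 - t ^ (k + i + 1) := by
                simpa [add_assoc] using hfac ht (k + i)
              linarith
            · have h1 : |t ^ (k + i + 1)| ≤ 1 := by
                rw [abs_pow]; exact pow_le_one₀ (abs_nonneg t) ht.le
              have := (abs_le.mp h1).1
              linarith
        _ = 2 ^ n := by rw [Finset.prod_const, Finset.card_range]
    have hDge : (1 - |t|) ^ n ≤ Dd t n := by
      rw [Dd]
      calc (1 - |t|) ^ n = ∏ _i ∈ Finset.range n, (1 - |t|) := by
            rw [Finset.prod_const, Finset.card_range]
        _ ≤ ∏ i ∈ Finset.range n, (1 - t ^ (i + 1)) := by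
            refine Finset.prod_le_prod (fun i _ => by positivity) (fun i _ => ?_)
            have h1 : t ^ (i + 1) ≤ |t ^ (i + 1)| := le_abs_self _
            have h2 : |t ^ (i + 1)| ≤ |t| := by
              rw [abs_pow]
              calc |t| ^ (i + 1) ≤ |t| ^ 1 :=
                    pow_le_pow_of_le_one (abs_nonneg t) ht.le (by omega)
                _ = |t| := pow_one _
            linarith
    have hrhs : |t| ^ n.choose 2 * (2 * |x| / (1 - |t|)) ^ n
        = |t| ^ n.choose 2 * |x| ^ n * 2 ^ n / (1 - |t|) ^ n := by
      rw [div_pow, mul_pow]; ring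
    rw [hrhs]
    gcongr
  · rw [Gg, if_neg (by omega)]
    simp only [abs_zero]
    positivity

private lemma summable_aux {c r : ℝ} (hc : 0 ≤ c) (hc1 : c < 1) (hr : 0 ≤ r) :
    Summable (fun n : ℕ => c ^ (n.choose 2) * r ^ n) := by
  refine summable_of_ratio_norm_eventually_le (r := 1/2) (by norm_num) ?_
  have h0 : Tendsto (fun n : ℕ => c ^ n * r) atTop (𝓝 0) := by
    simpa using (tendsto_pow_atTop_nhds_zero_of_lt_one hc hc1).mul_const r
  filter_upwards [h0.eventually_le_const (by norm_num : (0:ℝ) < 1/2)] with n hn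
  rw [Real.norm_eq_abs, Real.norm_eq_abs,
    abs_of_nonneg (mul_nonneg (pow_nonneg hc _) (pow_nonneg hr _)),
    abs_of_nonneg (mul_nonneg (pow_nonneg hc _) (pow_nonneg hr _)),
    choose2succ, pow_add, pow_succ]
  calc c ^ n.choose 2 * c ^ n * (r ^ n * r)
      = (c ^ n.choose 2 * r ^ n) * (c ^ n * r) := by ring
    _ ≤ (c ^ n.choose 2 * r ^ n) * (1/2) :=
        mul_le_mul_of_nonneg_left hn
          (mul_nonneg (pow_nonneg hc _) (pow_nonneg hr _))
    _ = 1/2 * (c ^ n.choose 2 * r ^ n) := by ring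

private lemma summable_bound (ht : |t| < 1) :
    Summable (fun n : ℕ => |t| ^ (n.choose 2) * (2 * |x| / (1 - |t|)) ^ n) := by
  have htpos : 0 < 1 - |t| := by linarith [abs_nonneg t]
  exact summable_aux (abs_nonneg t) ht (by positivity)

private lemma Gg_tendsto (ht : |t| < 1) (n : ℕ) :
    Tendsto (fun N => Gg t x N n) atTop
      (𝓝 (t ^ (n.choose 2) * x ^ n / Dd t n)) := by
  have key : ∀ N, n ≤ N → Gg t x N n
      = t ^ (n.choose 2) * x ^ n / Dd t n
        * ∏ i ∈ Finset.range n, (1 - t ^ (N - n + i + 1)) := by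
    intro N hN
    have hdn := (hD ht n).ne'
    have hdk := (hD ht (N - n)).ne'
    have hsplit : Dd t N = Dd t (N - n) * ∏ i ∈ Finset.range n, (1 - t ^ (N - n + i + 1)) := by
      have h := Dsplit (t := t) (N - n) n
      rwa [Nat.sub_add_cancel hN] at h
    rw [Gg, if_pos hN, hsplit]
    field_simp
  have hlim : Tendsto (fun N => t ^ (n.choose 2) * x ^ n / Dd t n
      * ∏ i ∈ Finset.range n, (1 - t ^ (N - n + i + 1))) atTop
      (𝓝 (t ^ (n.choose 2) * x ^ n / Dd t n)) := by
    have hprod : Tendsto (fun N => ∏ i ∈ Finset.range n, (1 - t ^ (N - n + i + 1))) atTop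
        (𝓝 (∏ _i ∈ Finset.range n, (1 : ℝ))) := by
      refine tendsto_finset_prod _ (fun i _ => ?_)
      have hm : Tendsto (fun N : ℕ => N - n + i + 1) atTop atTop :=
        tendsto_atTop_mono (fun N => by omega) (tendsto_sub_atTop_nat n)
      have hp : Tendsto (fun m : ℕ => t ^ m) atTop (𝓝 0) :=
        tendsto_pow_atTop_nhds_zero_of_abs_lt_one ht
      have := (tendsto_const_nhds (x := (1:ℝ))).sub (hp.comp hm)
      simpa [Function.comp] using this
    have := hprod.const_mul (t ^ (n.choose 2) * x ^ n / Dd t n)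
    simpa using this
  refine Tendsto.congr' ?_ hlim
  filter_upwards [eventually_ge_atTop n] with N hN
  exact (key N hN).symm

private lemma mult (ht : |t| < 1) : Multipliable (fun i : ℕ => 1 + x * t ^ i) := by
  obtain ⟨k, hk⟩ : ∃ k : ℕ, |x| * |t| ^ k ≤ 1/2 := by
    have h0 : Tendsto (fun k : ℕ => |x| * |t| ^ k) atTop (𝓝 0) := by
      simpa using (tendsto_pow_atTop_nhds_zero_of_lt_one (abs_nonneg t) ht).const_mul |x|
    exact (h0.eventually_le_const (by norm_num : (0:ℝ) < 1/2)).exists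
  have hu : ∀ n : ℕ, |x * t ^ (n + k)| ≤ 1/2 * |t| ^ n := by
    intro n
    rw [abs_mul, abs_pow, pow_add]
    calc |x| * (|t| ^ n * |t| ^ k) = (|x| * |t| ^ k) * |t| ^ n := by ring
      _ ≤ 1/2 * |t| ^ n := mul_le_mul_of_nonneg_right hk (pow_nonneg (abs_nonneg t) n)
  have hu2 : ∀ n : ℕ, |x * t ^ (n + k)| ≤ 1/2 := by
    intro n
    refine (hu n).trans ?_
    have := pow_le_one₀ (abs_nonneg t) ht.le (n := n)
    linarith
  have hpos : ∀ n : ℕ, 0 < 1 + x * t ^ (n + k) := by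
    intro n
    have := (abs_le.mp (hu2 n)).1
    linarith
  have hlog : Summable (fun n : ℕ => Real.log (1 + x * t ^ (n + k))) := by
    refine Summable.of_norm_bounded (g := fun n => |t| ^ n)
      (summable_geometric_of_lt_one (abs_nonneg t) ht) (fun n => ?_)
    have hy2 : |(-(x * t ^ (n + k)))| ≤ 1/2 * |t| ^ n := by rw [abs_neg]; exact hu n
    have hy3 : |(-(x * t ^ (n + k)))| ≤ 1/2 := by rw [abs_neg]; exact hu2 n
    have hy1 : |(-(x * t ^ (n + k)))| < 1 := lt_of_le_of_lt hy3 (by norm_num)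
    have hb := Real.abs_log_sub_add_sum_range_le hy1 0
    simp only [Finset.range_zero, Finset.sum_empty, zero_add, pow_one] at hb
    have he : (1 : ℝ) - -(x * t ^ (n + k)) = 1 + x * t ^ (n + k) := by ring
    rw [he] at hb
    rw [Real.norm_eq_abs]
    refine hb.trans ?_
    rw [div_le_iff₀ (by linarith)]
    nlinarith [pow_nonneg (abs_nonneg t) n, abs_nonneg (-(x * t ^ (n + k)))]
  have h := Real.multipliable_of_summable_log (f := fun n => 1 + x * t ^ (n + k)) hpos hlog
  exact Multipliable.comp_nat_add (k := k) h

end aux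

/-- Euler's identity: `∑_{n≥0} t^{binom(n,2)} x^n / (t;t)_n = (-x;t)_∞ = ∏_{i≥0}(1 + x t^i)`
(for `|t| < 1`, where all the series and products converge). -/
theorem stmt_13 (t x : ℝ) (ht : |t| < 1) :
    ∑' n : ℕ, t ^ (Nat.choose n 2) * x ^ n / ∏ i ∈ Finset.range n, (1 - t ^ (i + 1)) =
      ∏' i : ℕ, (1 + x * t ^ i) := by
  have h1 : Tendsto (fun N => ∏ i ∈ Finset.range N, (1 + x * t ^ i)) atTop
      (𝓝 (∏' i : ℕ, (1 + x * t ^ i))) := (mult ht).hasProd.tendsto_prod_nat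
  have h2 : Tendsto (fun N => ∑' n, Gg t x N n) atTop
      (𝓝 (∑' n : ℕ, t ^ (Nat.choose n 2) * x ^ n / Dd t n)) := by
    refine tendsto_tsum_of_dominated_convergence (summable_bound (x := x) ht) (Gg_tendsto ht) ?_
    exact Filter.Eventually.of_forall fun N n => by
      simpa [Real.norm_eq_abs] using Gg_bound ht N n
  have h3 : Tendsto (fun N => ∏ i ∈ Finset.range N, (1 + x * t ^ i)) atTop
      (𝓝 (∑' n : ℕ, t ^ (Nat.choose n 2) * x ^ n / Dd t n)) :=
    h2.congr fun N => tsum_Gg ht N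
  have h4 := tendsto_nhds_unique h3 h1
  simpa [Dd] using h4
end

section
/- For fixed 0 < t < 1, H(-1;t) = (-t;t)_∞ · (-t;t²)_∞, where H(x;t) = sum over k ≥ 0 of t^{k²} x^{2k} / (t;t)_k times ∏_{j ≥ k+1}(1 - t^j x). -/
set_option maxHeartbeats 1000000

open Real Finset Filter

namespace Stmt16Aux

/-- partial q-Pochhammer `(q;q)_n` -/
noncomputable def D (q : ℝ) (n : ℕ) : ℝ := ∏ i ∈ Finset.range n, (1 - q ^ (i + 1))

/-- coefficients of Euler's series -/
noncomputable def A (q : ℝ) (n : ℕ) : ℝ := q ^ (∑ i ∈ Finset.range n, i) / D q n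

/-- Euler's series -/
noncomputable def F (q x : ℝ) : ℝ := ∑' n, A q n * x ^ n

/-- a positive uniform lower bound for `D q n` -/
noncomputable def cc (q : ℝ) : ℝ := Real.exp (∑' i : ℕ, Real.log (1 - q ^ (i + 1)))

lemma cc_pos (q : ℝ) : 0 < cc q := Real.exp_pos _

section

variable {q : ℝ} (hq0 : 0 < q) (hq1 : q < 1)
include hq0 hq1

lemma pow_succ_lt_one (i : ℕ) : q ^ (i + 1) < 1 :=
  pow_lt_one₀ hq0.le hq1 (Nat.succ_ne_zero i)

lemma D_pos (n : ℕ) : 0 < D q n := by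
  refine Finset.prod_pos fun i _ => ?_
  have := pow_succ_lt_one hq0 hq1 i
  linarith

lemma summable_log : Summable fun i : ℕ => Real.log (1 - q ^ (i + 1)) := by
  rw [← summable_neg_iff]
  have hnn : ∀ i : ℕ, 0 ≤ -Real.log (1 - q ^ (i + 1)) := by
    intro i
    have h1 : (0:ℝ) < 1 - q ^ (i + 1) := by
      have := pow_succ_lt_one hq0 hq1 i; linarith
    have h2 : q ^ (i + 1) > 0 := pow_pos hq0 _
    have : Real.log (1 - q ^ (i + 1)) ≤ 0 :=
      Real.log_nonpos (by linarith) (by linarith)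
    linarith
  refine Summable.of_nonneg_of_le hnn (fun i => ?_)
    ((summable_geometric_of_lt_one hq0.le hq1).mul_left (1 - q)⁻¹)
  have hp : 0 < q ^ (i + 1) := pow_pos hq0 _
  have h1 : (0:ℝ) < 1 - q ^ (i + 1) := by
    have := pow_succ_lt_one hq0 hq1 i; linarith
  have hlog := Real.log_le_sub_one_of_pos (inv_pos.2 h1)
  rw [Real.log_inv] at hlog
  have hv : (0:ℝ) < 1 - q := by linarith
  have h2 : 1 - q ≤ 1 - q ^ (i + 1) := by
    have h : q ^ (i + 1) ≤ q ^ 1 := pow_le_pow_of_le_one hq0.le hq1.le (Nat.le_add_left 1 i)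
    rw [pow_one] at h
    linarith
  have hle : (1 - q ^ (i + 1))⁻¹ - 1 ≤ (1 - q)⁻¹ * q ^ i := by
    calc (1 - q ^ (i + 1))⁻¹ - 1 = q ^ (i + 1) / (1 - q ^ (i + 1)) := by field_simp; ring
      _ ≤ q ^ (i + 1) / (1 - q) := div_le_div_of_nonneg_left hp.le hv h2
      _ = (1 - q)⁻¹ * (q ^ i * q) := by rw [pow_succ]; ring
      _ ≤ (1 - q)⁻¹ * q ^ i := by
          refine mul_le_mul_of_nonneg_left ?_ (inv_pos.2 hv).le
          nlinarith [pow_nonneg hq0.le i]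
  linarith

lemma cc_le_D (n : ℕ) : cc q ≤ D q n := by
  have hs := summable_log hq0 hq1
  have hsplit := (Summable.sum_add_tsum_nat_add (f := fun i : ℕ => Real.log (1 - q ^ (i + 1))) n hs).symm
  have htail : (∑' i : ℕ, Real.log (1 - q ^ (i + n + 1))) ≤ 0 := by
    refine tsum_nonpos fun i => ?_
    have h1 := pow_succ_lt_one hq0 hq1 (i + n)
    have h2 : q ^ (i + n + 1) > 0 := pow_pos hq0 _
    exact Real.log_nonpos (by linarith) (by linarith)
  have h1 : (∑' i : ℕ, Real.log (1 - q ^ (i + 1))) ≤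
      ∑ i ∈ Finset.range n, Real.log (1 - q ^ (i + 1)) := by
    rw [hsplit]; linarith
  calc cc q ≤ Real.exp (∑ i ∈ Finset.range n, Real.log (1 - q ^ (i + 1))) :=
        Real.exp_le_exp.2 h1
    _ = D q n := by
        rw [Real.exp_sum]
        refine Finset.prod_congr rfl fun i _ => Real.exp_log ?_
        have := pow_succ_lt_one hq0 hq1 i; linarith

lemma A_pos (n : ℕ) : 0 < A q n := div_pos (pow_pos hq0 _) (D_pos hq0 hq1 n)

lemma A_le (n : ℕ) : A q n ≤ (cc q)⁻¹ := by
  have h1 : q ^ (∑ i ∈ Finset.range n, i) ≤ 1 := pow_le_one₀ hq0.le hq1.le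
  have h2 := cc_le_D hq0 hq1 n
  have h3 := cc_pos q
  have h4 := D_pos hq0 hq1 n
  rw [A, div_le_iff₀ h4]
  calc q ^ (∑ i ∈ Finset.range n, i) ≤ 1 := h1
    _ ≤ (cc q)⁻¹ * D q n := by
        rw [← inv_mul_cancel₀ h3.ne']
        exact mul_le_mul_of_nonneg_left h2 (inv_nonneg.2 h3.le)

lemma summable_F {x : ℝ} (hx0 : 0 ≤ x) (hx1 : x < 1) :
    Summable fun n : ℕ => A q n * x ^ n := by
  refine Summable.of_nonneg_of_le
    (fun n => mul_nonneg (A_pos hq0 hq1 n).le (pow_nonneg hx0 n))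
    (fun n => ?_) ((summable_geometric_of_lt_one hx0 hx1).mul_left (cc q)⁻¹)
  exact mul_le_mul_of_nonneg_right (A_le hq0 hq1 n) (pow_nonneg hx0 n)

lemma A_rec (n : ℕ) : A q (n + 1) * (1 - q ^ (n + 1)) = q ^ n * A q n := by
  have hD : D q (n + 1) = D q n * (1 - q ^ (n + 1)) := Finset.prod_range_succ _ n
  have hs : (∑ i ∈ Finset.range (n + 1), i) = (∑ i ∈ Finset.range n, i) + n :=
    Finset.sum_range_succ _ n
  have h1 : (1:ℝ) - q ^ (n + 1) ≠ 0 := by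
    have := pow_succ_lt_one hq0 hq1 n; linarith
  have h2 : D q n ≠ 0 := (D_pos hq0 hq1 n).ne'
  rw [A, A, hD, hs, pow_add]
  field_simp

lemma F_funeq {x : ℝ} (hx0 : 0 ≤ x) (hx1 : x < 1) :
    F q x = (1 + x) * F q (q * x) := by
  have hqx0 : 0 ≤ q * x := mul_nonneg hq0.le hx0
  have hqx1 : q * x < 1 := by nlinarith
  have hS : Summable fun n : ℕ => A q n * x ^ n := summable_F hq0 hq1 hx0 hx1
  have hSq : Summable fun n : ℕ => A q n * (q * x) ^ n := summable_F hq0 hq1 hqx0 hqx1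
  have hSq1 : Summable fun n : ℕ => A q (n + 1) * (q * x) ^ (n + 1) :=
    (summable_nat_add_iff 1).2 hSq
  have hSq2 : Summable fun n : ℕ => A q n * (q * x) ^ n * x := hSq.mul_right x
  have key : ∀ n : ℕ, A q (n + 1) * x ^ (n + 1) =
      A q (n + 1) * (q * x) ^ (n + 1) + A q n * (q * x) ^ n * x := by
    intro n
    have hr := A_rec hq0 hq1 n
    linear_combination x ^ (n + 1) * hr
  simp only [F]
  calc (∑' n, A q n * x ^ n)
      = A q 0 * x ^ 0 + ∑' n, A q (n + 1) * x ^ (n + 1) := Summable.tsum_eq_zero_add hS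
    _ = A q 0 * x ^ 0 + ∑' n, (A q (n + 1) * (q * x) ^ (n + 1) + A q n * (q * x) ^ n * x) := by
        rw [tsum_congr fun n => key n]
    _ = A q 0 * (q * x) ^ 0 + ((∑' n, A q (n + 1) * (q * x) ^ (n + 1)) +
          ∑' n, A q n * (q * x) ^ n * x) := by
        rw [Summable.tsum_add hSq1 hSq2]; norm_num
    _ = (A q 0 * (q * x) ^ 0 + ∑' n, A q (n + 1) * (q * x) ^ (n + 1)) +
          (∑' n, A q n * (q * x) ^ n) * x := by rw [tsum_mul_right]; ring
    _ = (∑' n, A q n * (q * x) ^ n) + (∑' n, A q n * (q * x) ^ n) * x := by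
        rw [← Summable.tsum_eq_zero_add hSq]
    _ = (1 + x) * (∑' n, A q n * (q * x) ^ n) := by ring

lemma F_iter {x : ℝ} (hx0 : 0 ≤ x) (hx1 : x < 1) (N : ℕ) :
    F q x = (∏ i ∈ Finset.range N, (1 + x * q ^ i)) * F q (q ^ N * x) := by
  induction N with
  | zero => simp
  | succ N ih =>
    have h0 : 0 ≤ q ^ N * x := mul_nonneg (pow_nonneg hq0.le N) hx0
    have h1 : q ^ N * x < 1 := by
      have := pow_le_one₀ hq0.le hq1.le (n := N)
      nlinarith [pow_nonneg hq0.le N]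
    rw [ih, F_funeq hq0 hq1 h0 h1, Finset.prod_range_succ]
    have h2 : q * (q ^ N * x) = q ^ (N + 1) * x := by ring
    rw [h2]; ring

lemma F_one_le {x : ℝ} (hx0 : 0 ≤ x) (hx1 : x < 1) : 1 ≤ F q x := by
  have hS : Summable fun n : ℕ => A q n * x ^ n := summable_F hq0 hq1 hx0 hx1
  have h0 : A q 0 * x ^ 0 = 1 := by simp [A, D]
  simp only [F]
  calc (1:ℝ) = A q 0 * x ^ 0 := h0.symm
    _ ≤ ∑' n, A q n * x ^ n :=
      Summable.le_tsum hS 0 fun j _ => mul_nonneg (A_pos hq0 hq1 j).le (pow_nonneg hx0 j)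

lemma F_le {x y : ℝ} (hx1 : x < 1) (hy0 : 0 ≤ y) (hyx : y ≤ x) :
    F q y ≤ 1 + (cc q)⁻¹ * (1 - x)⁻¹ * y := by
  have hx0 : 0 ≤ x := le_trans hy0 hyx
  have hy1 : y < 1 := lt_of_le_of_lt hyx hx1
  have hS : Summable fun n : ℕ => A q n * y ^ n := summable_F hq0 hq1 hy0 hy1
  have hmaj : Summable fun n : ℕ => (cc q)⁻¹ * x ^ n * y :=
    (((summable_geometric_of_lt_one hx0 hx1).mul_left (cc q)⁻¹).mul_right y)
  have hbound : ∀ n : ℕ, A q (n + 1) * y ^ (n + 1) ≤ (cc q)⁻¹ * x ^ n * y := by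
    intro n
    have h1 : A q (n + 1) ≤ (cc q)⁻¹ := A_le hq0 hq1 (n + 1)
    have h2 : y ^ n ≤ x ^ n := pow_le_pow_left₀ hy0 hyx n
    have h4 : 0 ≤ y ^ n := pow_nonneg hy0 n
    have h6 : 0 ≤ (cc q)⁻¹ := inv_nonneg.2 (cc_pos q).le
    calc A q (n + 1) * y ^ (n + 1) ≤ (cc q)⁻¹ * y ^ (n + 1) :=
          mul_le_mul_of_nonneg_right h1 (pow_nonneg hy0 _)
      _ = (cc q)⁻¹ * y ^ n * y := by rw [pow_succ]; ring
      _ ≤ (cc q)⁻¹ * x ^ n * y := by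
          refine mul_le_mul_of_nonneg_right ?_ hy0
          exact mul_le_mul_of_nonneg_left h2 h6
  have htail : (∑' n : ℕ, A q (n + 1) * y ^ (n + 1)) ≤ (cc q)⁻¹ * (1 - x)⁻¹ * y := by
    have hh := Summable.tsum_le_tsum hbound ((summable_nat_add_iff 1).2 hS) hmaj
    refine le_trans hh (le_of_eq ?_)
    rw [tsum_mul_right, tsum_mul_left, tsum_geometric_of_lt_one hx0 hx1]
  have h0 : A q 0 * y ^ 0 = 1 := by simp [A, D]
  simp only [F]
  calc (∑' n, A q n * y ^ n)
      = A q 0 * y ^ 0 + ∑' n, A q (n + 1) * y ^ (n + 1) := Summable.tsum_eq_zero_add hS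
    _ ≤ 1 + (cc q)⁻¹ * (1 - x)⁻¹ * y := by rw [h0]; linarith

lemma multipliable_one_add {x : ℝ} (hx0 : 0 ≤ x) :
    Multipliable fun i : ℕ => 1 + x * q ^ i := by
  have hpos : ∀ i : ℕ, (0:ℝ) < 1 + x * q ^ i := by
    intro i; have := mul_nonneg hx0 (pow_nonneg hq0.le i); linarith
  have hlog : Summable fun i : ℕ => Real.log (1 + x * q ^ i) := by
    refine Summable.of_nonneg_of_le (fun i => ?_) (fun i => ?_)
      ((summable_geometric_of_lt_one hq0.le hq1).mul_left x)
    · exact Real.log_nonneg (by nlinarith [mul_nonneg hx0 (pow_nonneg hq0.le i)])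
    · have := Real.log_le_sub_one_of_pos (hpos i); linarith
  have h := hlog.hasSum.rexp
  have he : (rexp ∘ fun i : ℕ => Real.log (1 + x * q ^ i)) = fun i : ℕ => 1 + x * q ^ i :=
    funext fun i => Real.exp_log (hpos i)
  rw [he] at h
  exact ⟨_, h⟩

/-- Euler's identity as a `HasProd` statement. -/
theorem euler_hasProd {x : ℝ} (hx0 : 0 ≤ x) (hx1 : x < 1) :
    HasProd (fun i : ℕ => 1 + x * q ^ i) (F q x) := by
  have hM := multipliable_one_add hq0 hq1 hx0
  have T1 := hM.hasProd.tendsto_prod_nat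
  have haux : ∀ N : ℕ, 0 ≤ q ^ N * x ∧ q ^ N * x < 1 ∧ q ^ N * x ≤ x := by
    intro N
    have h1 := pow_le_one₀ hq0.le hq1.le (n := N)
    have h2 := pow_nonneg hq0.le N
    refine ⟨mul_nonneg h2 hx0, ?_, ?_⟩ <;> nlinarith
  have hFpos : ∀ N : ℕ, 0 < F q (q ^ N * x) := fun N =>
    lt_of_lt_of_le one_pos (F_one_le hq0 hq1 (haux N).1 (haux N).2.1)
  have hT : Tendsto (fun N : ℕ => F q (q ^ N * x)) atTop (nhds 1) := by
    have hq' : Tendsto (fun N : ℕ => q ^ N) atTop (nhds 0) :=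
      tendsto_pow_atTop_nhds_zero_of_lt_one hq0.le hq1
    have hub : Tendsto (fun N : ℕ => 1 + (cc q)⁻¹ * (1 - x)⁻¹ * (q ^ N * x)) atTop (nhds 1) := by
      have h1 : Tendsto (fun N : ℕ => q ^ N * x) atTop (nhds 0) := by
        simpa using hq'.mul_const x
      have h2 := (h1.const_mul ((cc q)⁻¹ * (1 - x)⁻¹)).const_add 1
      simpa [mul_assoc] using h2
    refine tendsto_of_tendsto_of_tendsto_of_le_of_le tendsto_const_nhds hub
      (fun N => F_one_le hq0 hq1 (haux N).1 (haux N).2.1)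
      (fun N => F_le hq0 hq1 hx1 (haux N).1 (haux N).2.2)
  have T2 : Tendsto (fun N : ℕ => ∏ i ∈ Finset.range N, (1 + x * q ^ i)) atTop
      (nhds (F q x)) := by
    have heq : (fun N : ℕ => ∏ i ∈ Finset.range N, (1 + x * q ^ i)) =
        fun N : ℕ => F q x / F q (q ^ N * x) := by
      funext N
      rw [F_iter hq0 hq1 hx0 hx1 N, mul_div_assoc, div_self (hFpos N).ne', mul_one]
    rw [heq]
    have h3 := Tendsto.div (tendsto_const_nhds (x := F q x) (f := atTop)) hT one_ne_zero
    simp only [div_one] at h3; exact h3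
  have h4 := tendsto_nhds_unique T1 T2
  rw [← h4]
  exact hM.hasProd

end

lemma A_sq_mul (t : ℝ) (k : ℕ) :
    A (t ^ 2) k * t ^ k = t ^ (k ^ 2) / D (t ^ 2) k := by
  rw [A, div_mul_eq_mul_div, ← pow_mul, ← pow_add]
  congr 2
  cases k with
  | zero => simp
  | succ n =>
    have h2 : (∑ i ∈ Finset.range (n + 1), i) * 2 = (n + 1) * n := by
      simpa using Finset.sum_range_id_mul_two (n + 1)
    calc 2 * (∑ i ∈ Finset.range (n + 1), i) + (n + 1)
        = (∑ i ∈ Finset.range (n + 1), i) * 2 + (n + 1) := by ring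
      _ = (n + 1) * n + (n + 1) := by rw [h2]
      _ = (n + 1) ^ 2 := by ring

end Stmt16Aux

open Stmt16Aux Finset

/-- For fixed `0 < t < 1`, `H(-1;t) = (-t;t)_∞ · (-t;t²)_∞`, where
`H(x;t) = ∑_{k≥0} t^{k²} x^{2k} / (t;t)_k · ∏_{j≥k+1} (1 - t^j x)`, evaluated at `x = -1`. -/
theorem stmt_16 (t : ℝ) (ht0 : 0 < t) (ht1 : t < 1) :
    ∑' k : ℕ, t ^ (k ^ 2) * (-1 : ℝ) ^ (2 * k) /
        (∏ i ∈ Finset.range k, (1 - t ^ (i + 1))) *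
        ∏' j : ℕ, (1 - t ^ (k + 1 + j) * (-1)) =
      (∏' i : ℕ, (1 + t ^ (i + 1))) * ∏' i : ℕ, (1 + t ^ (2 * i + 1)) := by
  have ht2_0 : (0:ℝ) < t ^ 2 := by positivity
  have ht2_1 : t ^ 2 < 1 := by nlinarith
  have hPe : HasProd (fun i : ℕ => 1 + t ^ (i + 1)) (F t t) := by
    have h := euler_hasProd ht0 ht1 (x := t) ht0.le ht1
    have he : (fun i : ℕ => 1 + t * t ^ i) = fun i : ℕ => 1 + t ^ (i + 1) := by
      funext i; rw [pow_succ']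
    rwa [he] at h
  have hPo : HasProd (fun i : ℕ => 1 + t ^ (2 * i + 1)) (F (t ^ 2) t) := by
    have h := euler_hasProd ht2_0 ht2_1 (x := t) ht0.le ht1
    have he : (fun i : ℕ => 1 + t * (t ^ 2) ^ i) = fun i : ℕ => 1 + t ^ (2 * i + 1) := by
      funext i; rw [← pow_mul, pow_succ']
    rwa [he] at h
  have hQpos : ∀ k : ℕ, (0:ℝ) < ∏ i ∈ Finset.range k, (1 + t ^ (i + 1)) := by
    intro k
    exact Finset.prod_pos fun i _ => by positivity
  have hD2 : ∀ k : ℕ, D (t ^ 2) k =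
      (∏ i ∈ Finset.range k, (1 - t ^ (i + 1))) * ∏ i ∈ Finset.range k, (1 + t ^ (i + 1)) := by
    intro k
    rw [D, ← Finset.prod_mul_distrib]
    refine Finset.prod_congr rfl fun i _ => ?_
    rw [← pow_mul]
    ring_nf
  have hterm : ∀ k : ℕ,
      t ^ (k ^ 2) * (-1 : ℝ) ^ (2 * k) / (∏ i ∈ Finset.range k, (1 - t ^ (i + 1))) *
        ∏' j : ℕ, (1 - t ^ (k + 1 + j) * (-1)) =
      (A (t ^ 2) k * t ^ k) * F t t := by
    intro k
    have hinner : (∏' j : ℕ, (1 - t ^ (k + 1 + j) * (-1))) = F t (t ^ (k + 1)) := by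
      have hEk := euler_hasProd ht0 ht1 (x := t ^ (k + 1))
        (pow_nonneg ht0.le (k + 1)) (pow_succ_lt_one ht0 ht1 k)
      refine Eq.trans (tprod_congr fun j => ?_) hEk.tprod_eq
      rw [pow_add]; ring
    have hiter := F_iter ht0 ht1 (x := t) ht0.le ht1 k
    have hQ : (∏ i ∈ Finset.range k, (1 + t * t ^ i)) =
        ∏ i ∈ Finset.range k, (1 + t ^ (i + 1)) :=
      Finset.prod_congr rfl fun i _ => by rw [pow_succ']
    rw [hQ, ← pow_succ] at hiter
    have hDt : (0:ℝ) < ∏ i ∈ Finset.range k, (1 - t ^ (i + 1)) := D_pos ht0 ht1 k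
    have hQk := hQpos k
    rw [hinner, A_sq_mul t k, hD2 k, hiter]
    rw [show ((-1:ℝ)) ^ (2 * k) = 1 by rw [pow_mul]; norm_num]
    field_simp
  rw [hPe.tprod_eq, hPo.tprod_eq, tsum_congr hterm, tsum_mul_right, mul_comm]
  simp only [F]
end

section
/- For fixed 0 < t < 1, H(x;t) > 0 whenever x < t^{-1} is real, and also H(t^{-i}; t) > 0 for every positive integer i; in particular H(t^{-i};t) ≠ 0. -/
open Real Filter Finset Topology



lemma my_log1sub {u : ℝ} (h : |u| ≤ 1/2) : |Real.log (1-u)| ≤ 2*|u| := by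
  obtain ⟨h1, h2⟩ := abs_le.mp h
  have hpos : (0:ℝ) < 1 - u := by linarith
  rcases le_or_gt u 0 with hu | hu
  · have hle : Real.log (1-u) ≤ (1-u) - 1 := Real.log_le_sub_one_of_pos hpos
    have hge : 0 ≤ Real.log (1-u) := Real.log_nonneg (by linarith)
    rw [abs_of_nonneg hge, abs_of_nonpos hu]; linarith
  · have h3 : Real.log (1-u) ≤ 0 := Real.log_nonpos (by linarith) (by linarith)
    rw [abs_of_nonpos h3, abs_of_pos hu]
    have h4 : -Real.log (1-u) = Real.log (1-u)⁻¹ := (Real.log_inv _).symm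
    have h5 : Real.log (1-u)⁻¹ ≤ (1-u)⁻¹ - 1 := Real.log_le_sub_one_of_pos (by positivity)
    have h6 : (1-u)⁻¹ ≤ 1 + 2*u := by
      rw [inv_le_iff_one_le_mul₀ hpos]
      nlinarith
    linarith

lemma my_aux_prod (t c : ℝ) (ht0 : 0 < t) (ht1 : t < 1) (h : ∀ j : ℕ, c * t ^ j < 1) :
    ∃ S : ℝ, HasProd (fun j : ℕ => 1 - c * t ^ j) (Real.exp S) ∧ S ≤ |c| / (1 - t) := by
  have hpos : ∀ j, (0:ℝ) < 1 - c * t ^ j := fun j => by linarith [h j]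
  obtain ⟨N, hN⟩ : ∃ N : ℕ, |c| * t ^ N ≤ 1/4 := by
    have h1 : Tendsto (fun n : ℕ => |c| * t ^ n) atTop (𝓝 0) := by
      simpa using (tendsto_pow_atTop_nhds_zero_of_lt_one ht0.le ht1).const_mul |c|
    exact (h1.eventually_le_const (by norm_num : (0:ℝ) < 1/4)).exists
  have hsum : Summable (fun j : ℕ => Real.log (1 - c * t ^ j)) := by
    rw [← summable_nat_add_iff N]
    apply Summable.of_norm
    refine Summable.of_nonneg_of_le (fun j => norm_nonneg _) (fun j => ?_)
      (summable_geometric_of_lt_one ht0.le ht1)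
    have habs : |c * t ^ (j + N)| ≤ 1/4 * t ^ j := by
      rw [abs_mul, abs_pow, abs_of_nonneg ht0.le, pow_add]
      calc |c| * (t ^ j * t ^ N) = (|c| * t ^ N) * t ^ j := by ring
        _ ≤ 1/4 * t ^ j := mul_le_mul_of_nonneg_right hN (by positivity)
    have ht2 : |c * t ^ (j + N)| ≤ 1/2 := by
      have htj : t ^ j ≤ 1 := pow_le_one₀ ht0.le ht1.le
      nlinarith
    calc ‖Real.log (1 - c * t ^ (j + N))‖ ≤ 2 * |c * t ^ (j + N)| := my_log1sub ht2
      _ ≤ 2 * (1/4 * t ^ j) := by linarith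
      _ ≤ t ^ j := by nlinarith [pow_nonneg ht0.le j]
  refine ⟨∑' j, Real.log (1 - c * t ^ j), ?_, ?_⟩
  · have h1 := hsum.hasSum.rexp
    have he : (fun j : ℕ => 1 - c * t ^ j) = (rexp ∘ fun j => Real.log (1 - c * t ^ j)) := by
      funext j
      simp only [Function.comp_apply, Real.exp_log (hpos j)]
    rw [he]
    exact h1
  · have hb : Summable (fun j : ℕ => |c| * t ^ j) :=
      (summable_geometric_of_lt_one ht0.le ht1).mul_left _
    calc ∑' j, Real.log (1 - c * t ^ j) ≤ ∑' j : ℕ, |c| * t ^ j := by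
          refine Summable.tsum_le_tsum (fun j => ?_) hsum hb
          have := Real.log_le_sub_one_of_pos (hpos j)
          have h2 : -(c * t ^ j) ≤ |c| * t ^ j := by
            nlinarith [neg_abs_le c, pow_nonneg ht0.le j]
          linarith
      _ = |c| / (1 - t) := by
          rw [tsum_mul_left, tsum_geometric_of_lt_one ht0.le ht1, div_eq_mul_inv]


lemma my_tprod_eq_zero {f : ℕ → ℝ} (j0 : ℕ) (h : f j0 = 0) : ∏' j, f j = 0 := by
  have hp : HasProd f 0 := by
    rw [HasProd]
    have hev : ∀ᶠ s : Finset ℕ in atTop, ∏ i ∈ s, f i = 0 := by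
      filter_upwards [eventually_ge_atTop ({j0} : Finset ℕ)] with s hs
      exact Finset.prod_eq_zero (hs (Finset.mem_singleton_self j0)) h
    exact Filter.Tendsto.congr' (hev.mono fun s hs => hs.symm) tendsto_const_nhds
  exact hp.tprod_eq


/-- For fixed `0 < t < 1` and `H(x;t) = ∑_{k≥0} t^{k²} x^{2k} / (t;t)_k · ∏_{j≥k+1}(1 - t^j x)`:
`H(x;t) > 0` for every real `x < t⁻¹`, and `H(t^{-i};t) > 0` (in particular `≠ 0`) for every
positive integer `i`. -/
theorem stmt_17 (t : ℝ) (ht0 : 0 < t) (ht1 : t < 1) (H : ℝ → ℝ)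
    (hH : ∀ x : ℝ, H x = ∑' k : ℕ, t ^ (k ^ 2) * x ^ (2 * k) /
        (∏ i ∈ Finset.range k, (1 - t ^ (i + 1))) * ∏' j : ℕ, (1 - t ^ (k + 1 + j) * x)) :
    (∀ x : ℝ, x < t⁻¹ → 0 < H x) ∧
      ∀ i : ℕ, 0 < i → 0 < H (t⁻¹ ^ i) ∧ H (t⁻¹ ^ i) ≠ 0 := by
  -- lower bound for the finite products
  obtain ⟨S0, hS00, -⟩ := my_aux_prod t t ht0 ht1 (fun j => by
    have he : t * t ^ j = t ^ (j + 1) := by ring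
    rw [he]; exact pow_lt_one₀ ht0.le ht1 (by omega : j + 1 ≠ 0))
  set cP := Real.exp S0 with hcPdef
  have hcP : 0 < cP := Real.exp_pos _
  have hPd : ∀ k : ℕ, (0:ℝ) < ∏ i ∈ Finset.range k, (1 - t ^ (i + 1)) := by
    intro k; apply Finset.prod_pos; intro i _
    have := pow_lt_one₀ ht0.le ht1 (by omega : i + 1 ≠ 0)
    linarith
  have hPk : ∀ k : ℕ, cP ≤ ∏ i ∈ Finset.range k, (1 - t ^ (i + 1)) := by
    have htd : Tendsto (fun n => ∏ j ∈ Finset.range n, (1 - t * t ^ j)) atTop (𝓝 cP) :=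
      hS00.tendsto_prod_nat
    have heq : (fun n => ∏ j ∈ Finset.range n, (1 - t * t ^ j)) =
        fun n => ∏ j ∈ Finset.range n, (1 - t ^ (j + 1)) := by
      funext n; apply Finset.prod_congr rfl; intro j _; ring_nf
    rw [heq] at htd
    have hant : Antitone (fun k : ℕ => ∏ i ∈ Finset.range k, (1 - t ^ (i + 1))) := by
      apply antitone_nat_of_succ_le
      intro n
      rw [Finset.prod_range_succ]
      have h1 := hPd n
      have h2 : t ^ (n + 1) ≥ 0 := by positivity
      nlinarith
    intro k
    refine le_of_tendsto htd ?_
    filter_upwards [eventually_ge_atTop k] with n hn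
    exact hant hn
  -- key infinite product bounds
  have hQ : ∀ (x : ℝ) (k : ℕ), (∀ j : ℕ, t ^ (k + 1 + j) * x < 1) →
      0 < (∏' j : ℕ, (1 - t ^ (k + 1 + j) * x)) ∧
      (∏' j : ℕ, (1 - t ^ (k + 1 + j) * x)) ≤ Real.exp (|t ^ (k + 1) * x| / (1 - t)) := by
    intro x k hk
    obtain ⟨S, hS, hSle⟩ := my_aux_prod t (t ^ (k + 1) * x) ht0 ht1 (fun j => by
      have he : t ^ (k + 1) * x * t ^ j = t ^ (k + 1 + j) * x := by rw [pow_add]; ring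
      rw [he]; exact hk j)
    have he : (fun j : ℕ => 1 - t ^ (k + 1) * x * t ^ j) =
        fun j : ℕ => 1 - t ^ (k + 1 + j) * x := by
      funext j; rw [pow_add]; ring
    rw [he] at hS
    rw [hS.tprod_eq]
    exact ⟨Real.exp_pos _, Real.exp_le_exp.mpr hSle⟩
  -- summability of the dominating sequence
  have hB : ∀ x : ℝ, Summable (fun k : ℕ => t ^ (k ^ 2) * x ^ (2 * k)) := by
    intro x
    have ht2 : t ^ 2 < 1 := by nlinarith
    have htnd : Tendsto (fun k : ℕ => (t * x ^ 2) * (t ^ 2) ^ k) atTop (𝓝 0) := by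
      simpa using (tendsto_pow_atTop_nhds_zero_of_lt_one (by positivity) ht2).const_mul (t * x ^ 2)
    apply summable_of_ratio_norm_eventually_le (r := 1/2) (by norm_num)
    filter_upwards [htnd.eventually_le_const (by norm_num : (0:ℝ) < 1/2)] with k hk
    have he : t ^ ((k + 1) ^ 2) * x ^ (2 * (k + 1)) =
        ((t * x ^ 2) * (t ^ 2) ^ k) * (t ^ (k ^ 2) * x ^ (2 * k)) := by
      rw [show (k + 1) ^ 2 = k ^ 2 + (2 * k + 1) by ring, show 2 * (k + 1) = 2 * k + 2 by ring,
        pow_add, pow_add, ← pow_mul]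
      ring
    rw [he, norm_mul]
    have h0 : (0:ℝ) ≤ (t * x ^ 2) * (t ^ 2) ^ k := by positivity
    rw [Real.norm_eq_abs, abs_of_nonneg h0]
    exact mul_le_mul_of_nonneg_right hk (norm_nonneg _)
  -- generic positivity of the sum
  have main : ∀ x : ℝ, (∀ k, 0 ≤ (∏' j : ℕ, (1 - t ^ (k + 1 + j) * x))) →
      (∀ k, (∏' j : ℕ, (1 - t ^ (k + 1 + j) * x)) ≤ Real.exp (t / (1 - t) * (|x| + 1))) →
      ∀ k0 : ℕ, 0 < t ^ (k0 ^ 2) * x ^ (2 * k0) /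
        (∏ i ∈ Finset.range k0, (1 - t ^ (i + 1))) * ∏' j : ℕ, (1 - t ^ (k0 + 1 + j) * x) →
      0 < H x := by
    intro x hQnn hQle k0 hk0
    rw [hH x]
    set f := fun k : ℕ => t ^ (k ^ 2) * x ^ (2 * k) /
        (∏ i ∈ Finset.range k, (1 - t ^ (i + 1))) * ∏' j : ℕ, (1 - t ^ (k + 1 + j) * x) with hf
    have hfnn : ∀ k, 0 ≤ f k := by
      intro k
      have h1 : (0:ℝ) ≤ t ^ (k ^ 2) * x ^ (2 * k) := by
        rw [show x ^ (2 * k) = (x ^ 2) ^ k by rw [← pow_mul]]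
        positivity
      exact mul_nonneg (div_nonneg h1 (hPd k).le) (hQnn k)
    have hfsum : Summable f := by
      set C := Real.exp (t / (1 - t) * (|x| + 1)) with hCdef
      apply Summable.of_nonneg_of_le hfnn (fun k => ?_) ((hB x).mul_left (C / cP))
      have hBnn : (0:ℝ) ≤ t ^ (k ^ 2) * x ^ (2 * k) := by
        rw [show x ^ (2 * k) = (x ^ 2) ^ k by rw [← pow_mul]]
        positivity
      calc f k ≤ t ^ (k ^ 2) * x ^ (2 * k) / cP * C := by
            apply mul_le_mul ?_ (hQle k) (hQnn k) (div_nonneg hBnn hcP.le)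
            exact div_le_div_of_nonneg_left hBnn hcP (hPk k)
        _ = C / cP * (t ^ (k ^ 2) * x ^ (2 * k)) := by ring
    exact Summable.tsum_pos hfsum hfnn k0 hk0
  constructor
  · -- part 1
    intro x hx
    have hcond : ∀ k j : ℕ, t ^ (k + 1 + j) * x < 1 := by
      intro k j
      rcases le_or_gt x 0 with hx0 | hx0
      · have := mul_nonpos_of_nonneg_of_nonpos (pow_nonneg ht0.le (k + 1 + j)) hx0
        linarith
      · have h1 : t ^ (k + 1 + j) ≤ t := by
          calc t ^ (k + 1 + j) ≤ t ^ 1 := pow_le_pow_of_le_one ht0.le ht1.le (by omega)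
            _ = t := pow_one t
        have h2 : t * x < 1 := by
          have h3 := (mul_lt_mul_of_pos_left hx ht0)
          rwa [mul_inv_cancel₀ ht0.ne'] at h3
        calc t ^ (k + 1 + j) * x ≤ t * x := mul_le_mul_of_nonneg_right h1 hx0.le
          _ < 1 := h2
    have hQle : ∀ k, (∏' j : ℕ, (1 - t ^ (k + 1 + j) * x)) ≤
        Real.exp (t / (1 - t) * (|x| + 1)) := by
      intro k
      refine (hQ x k (hcond k)).2.trans (Real.exp_le_exp.mpr ?_)
      have h1 : |t ^ (k + 1) * x| ≤ t * |x| := by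
        rw [abs_mul, abs_pow, abs_of_nonneg ht0.le]
        apply mul_le_mul_of_nonneg_right ?_ (abs_nonneg x)
        calc t ^ (k + 1) ≤ t ^ 1 := pow_le_pow_of_le_one ht0.le ht1.le (by omega)
          _ = t := pow_one t
      have h2 : (0:ℝ) < 1 - t := by linarith
      rw [div_mul_eq_mul_div]
      apply div_le_div_of_nonneg_right ?_ h2.le
      nlinarith [abs_nonneg x]
    apply main x (fun k => (hQ x k (hcond k)).1.le) hQle 0
    have h0 := (hQ x 0 (hcond 0)).1
    simpa using h0
  · -- part 2
    intro i hi
    have hxne : (t:ℝ) ^ i ≠ 0 := pow_ne_zero i ht0.ne'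
    have hpow : ∀ m : ℕ, i ≤ m → t ^ m * t⁻¹ ^ i = t ^ (m - i) := by
      intro m him
      calc t ^ m * t⁻¹ ^ i = t ^ ((m - i) + i) * (t ^ i)⁻¹ := by
            rw [inv_pow, Nat.sub_add_cancel him]
        _ = t ^ (m - i) := by
            rw [pow_add, mul_assoc, mul_inv_cancel₀ hxne, mul_one]
    have hcond : ∀ k : ℕ, i ≤ k → ∀ j : ℕ, t ^ (k + 1 + j) * t⁻¹ ^ i < 1 := by
      intro k hik j
      rw [hpow _ (by omega)]
      exact pow_lt_one₀ ht0.le ht1 (by omega)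
    have hQzero : ∀ k : ℕ, k < i → (∏' j : ℕ, (1 - t ^ (k + 1 + j) * t⁻¹ ^ i)) = 0 := by
      intro k hk
      apply my_tprod_eq_zero (i - k - 1)
      rw [show k + 1 + (i - k - 1) = i by omega, hpow i le_rfl, Nat.sub_self, pow_zero]
      ring
    have hQnn : ∀ k, 0 ≤ (∏' j : ℕ, (1 - t ^ (k + 1 + j) * t⁻¹ ^ i)) := by
      intro k
      rcases lt_or_ge k i with hk | hk
      · rw [hQzero k hk]
      · exact (hQ _ k (hcond k hk)).1.le
    have hQle : ∀ k, (∏' j : ℕ, (1 - t ^ (k + 1 + j) * t⁻¹ ^ i)) ≤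
        Real.exp (t / (1 - t) * (|t⁻¹ ^ i| + 1)) := by
      intro k
      have hC1 : (0:ℝ) ≤ t / (1 - t) * (|t⁻¹ ^ i| + 1) := by
        have h2 : (0:ℝ) < 1 - t := by linarith
        positivity
      rcases lt_or_ge k i with hk | hk
      · rw [hQzero k hk]
        exact (Real.exp_pos _).le
      · refine (hQ _ k (hcond k hk)).2.trans (Real.exp_le_exp.mpr ?_)
        have h1 : |t ^ (k + 1) * t⁻¹ ^ i| = t ^ (k + 1 - i) := by
          rw [hpow _ (by omega), abs_of_nonneg (by positivity)]
        have h2 : (0:ℝ) < 1 - t := by linarith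
        rw [h1]
        have h3 : t ^ (k + 1 - i) ≤ t := by
          calc t ^ (k + 1 - i) ≤ t ^ 1 := pow_le_pow_of_le_one ht0.le ht1.le (by omega)
            _ = t := pow_one t
        rw [div_mul_eq_mul_div]
        apply div_le_div_of_nonneg_right ?_ h2.le
        nlinarith [abs_nonneg ((t:ℝ)⁻¹ ^ i)]
    have hpos : 0 < H (t⁻¹ ^ i) := by
      apply main _ hQnn hQle i
      have h1 : 0 < (∏' j : ℕ, (1 - t ^ (i + 1 + j) * t⁻¹ ^ i)) := (hQ _ i (hcond i le_rfl)).1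
      have h2 : (0:ℝ) < t ^ (i ^ 2) * (t⁻¹ ^ i) ^ (2 * i) := by positivity
      exact mul_pos (div_pos h2 (hPd i)) h1
    exact ⟨hpos, hpos.ne'⟩
end
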